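/- arXiv:1412.1616 — 9 statements merged into one kernel-verified Lean document; each statement's English description precedes it below -/
import Mathlib

section
/- For every natural number n and every real x, the derivatives f_n of f(x) = 1/(1+x^2) satisfy the recurrence (1+x^2) f_{n+2}(x) + 2(n+2) x f_{n+1}(x) + (n+2)(n+1) f_n(x) = 0. -/
theorem stmt_1 (f : ℝ → ℝ) (hf : ∀ x : ℝ, f x = 1 / (1 + x ^ 2)) (n : ℕ) (x : ℝ) :
    (1 + x ^ 2) * iteratedDeriv (n + 2) f x + 2 * (n + 2) * x * iteratedDeriv (n + 1) f x
      + (n + 2) * (n + 1) * iteratedDeriv n f x = 0 := by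
  have hfe : f = fun x : ℝ => 1 / (1 + x ^ 2) := funext hf
  have hne : ∀ y : ℝ, (1 + y ^ 2) ≠ 0 := fun y => by positivity
  have hsmooth : ContDiff ℝ ⊤ f := by
    rw [hfe]
    exact ContDiff.div contDiff_const (contDiff_const.add (contDiff_id.pow 2)) hne
  have hd : ∀ (k : ℕ) (y : ℝ), HasDerivAt (iteratedDeriv k f) (iteratedDeriv (k + 1) f y) y := by
    intro k y
    rw [iteratedDeriv_succ]
    exact ((hsmooth.differentiable_iteratedDeriv k
      (by simp)).differentiableAt).hasDerivAt
  induction n generalizing x with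
  | zero =>
    have hden : ∀ y : ℝ, HasDerivAt (fun y : ℝ => 1 + y ^ 2) (2 * y) y := by
      intro y
      simpa using (hasDerivAt_const y (1:ℝ)).fun_add ((hasDerivAt_id y).fun_pow 2)
    have h1 : deriv f = fun y : ℝ => (-2 * y) / (1 + y ^ 2) ^ 2 := by
      funext y
      have : HasDerivAt f ((0 * (1 + y ^ 2) - 1 * (2 * y)) / (1 + y ^ 2) ^ 2) y := by
        rw [hfe]
        exact (hasDerivAt_const y (1:ℝ)).div (hden y) (hne y)
      have := this.deriv
      rw [this]; ring
    have h2 : deriv (deriv f) x = (6 * x ^ 2 - 2) / (1 + x ^ 2) ^ 3 := by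
      have hden2 : HasDerivAt (fun y : ℝ => (1 + y ^ 2) ^ 2) (2 * (1 + x ^ 2) * (2 * x)) x := by
        simpa using (hden x).fun_pow 2
      have hnum : HasDerivAt (fun y : ℝ => -2 * y) (-2) x := by
        simpa using (hasDerivAt_id x).const_mul (-2 : ℝ)
      have h : HasDerivAt (deriv f)
          ((-2 * (1 + x ^ 2) ^ 2 - (-2 * x) * (2 * (1 + x ^ 2) * (2 * x))) / ((1 + x ^ 2) ^ 2) ^ 2)
          x := by
        rw [h1]
        exact hnum.div hden2 (pow_ne_zero 2 (hne x))
      rw [h.deriv]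
      field_simp
      ring
    show (1 + x ^ 2) * iteratedDeriv (0 + 2) f x + 2 * ((0:ℕ) + 2) * x * iteratedDeriv (0 + 1) f x
      + ((0:ℕ) + 2) * ((0:ℕ) + 1) * iteratedDeriv 0 f x = 0
    rw [show (0+2 : ℕ) = 2 from rfl, show (0+1 : ℕ) = 1 from rfl,
      iteratedDeriv_zero, show (2:ℕ) = 1 + 1 from rfl, iteratedDeriv_succ, iteratedDeriv_one,
      h2, h1, hf]
    push_cast
    field_simp
    ring
  | succ n ih =>
    have hzero : (fun y : ℝ => (1 + y ^ 2) * iteratedDeriv (n + 2) f y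
        + 2 * ((n:ℝ) + 2) * y * iteratedDeriv (n + 1) f y
        + ((n:ℝ) + 2) * ((n:ℝ) + 1) * iteratedDeriv n f y) = fun _ => (0:ℝ) := by
      funext y
      have := ih y
      push_cast at this ⊢
      linarith
    have hden : HasDerivAt (fun y : ℝ => 1 + y ^ 2) (2 * x) x := by
      simpa using (hasDerivAt_const x (1:ℝ)).fun_add ((hasDerivAt_id x).fun_pow 2)
    have hD : HasDerivAt (fun y : ℝ => (1 + y ^ 2) * iteratedDeriv (n + 2) f y
        + 2 * ((n:ℝ) + 2) * y * iteratedDeriv (n + 1) f y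
        + ((n:ℝ) + 2) * ((n:ℝ) + 1) * iteratedDeriv n f y)
        ((2 * x) * iteratedDeriv (n + 2) f x + (1 + x ^ 2) * iteratedDeriv (n + 3) f x
          + (2 * ((n:ℝ) + 2) * iteratedDeriv (n + 1) f x
            + 2 * ((n:ℝ) + 2) * x * iteratedDeriv (n + 2) f x)
          + ((n:ℝ) + 2) * ((n:ℝ) + 1) * iteratedDeriv (n + 1) f x) x := by
      have h1 := hden.fun_mul (hd (n + 2) x)
      have h2 : HasDerivAt (fun y : ℝ => 2 * ((n:ℝ) + 2) * y * iteratedDeriv (n + 1) f y)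
          (2 * ((n:ℝ) + 2) * iteratedDeriv (n + 1) f x
            + 2 * ((n:ℝ) + 2) * x * iteratedDeriv (n + 2) f x) x := by
        have h := (((hasDerivAt_id x).const_mul (2 * ((n:ℝ) + 2))).fun_mul (hd (n + 1) x))
        simp only [id_eq] at h
        exact h.congr_deriv (by ring)
      have h3 := (hd n x).const_mul (((n:ℝ) + 2) * ((n:ℝ) + 1))
      have := (h1.fun_add h2).fun_add h3
      convert this using 2
    have hD0 : HasDerivAt (fun _ : ℝ => (0:ℝ)) 0 x := hasDerivAt_const x 0
    rw [hzero] at hD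
    have hkey := hD.unique hD0
    push_cast
    push_cast at hkey
    have e1 : (n:ℝ) + 1 + 2 = (n:ℝ) + 3 := by ring
    have e2 : (n + 1 + 2 : ℕ) = n + 3 := by ring
    have e3 : (n + 1 + 1 : ℕ) = n + 2 := by ring
    rw [e2, e3]
    nlinarith [hkey]
end

section
/- For every natural number n ≥ 2, the values at 0 of the derivatives of f(x) = 1/(1+x^2) satisfy f_n(0) = -n(n-1) f_{n-2}(0). -/
theorem stmt_2 (f : ℝ → ℝ) (hf : ∀ x : ℝ, f x = 1 / (1 + x ^ 2)) (n : ℕ) (hn : 2 ≤ n) :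
    iteratedDeriv n f 0 = -(n * (n - 1)) * iteratedDeriv (n - 2) f 0 := by
  set a : ℕ → ℝ := fun m => if Even m then (-1 : ℝ) ^ (m / 2) else 0 with ha
  have hnorm : ∀ m, ‖a m‖ ≤ 1 := by
    intro m
    simp only [ha]
    split_ifs
    · rw [norm_pow, norm_neg, norm_one, one_pow]
    · simp
  have hps : HasFPowerSeriesOnBall f (FormalMultilinearSeries.ofScalars ℝ a) 0 1 := by
    refine ⟨?_, one_pos, ?_⟩
    · have := FormalMultilinearSeries.le_radius_of_bound
        (FormalMultilinearSeries.ofScalars ℝ a) 1 (r := 1) (fun m => ?_)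
      · simpa using this
      · rw [FormalMultilinearSeries.ofScalars_norm]
        simpa using hnorm m
    · intro y hy
      have hy1 : |y| < 1 := by
        simpa [edist_dist, Real.dist_eq, ENNReal.ofReal_lt_one] using hy
      have hlt : ‖-y ^ 2‖ < 1 := by
        rw [norm_neg, norm_pow, Real.norm_eq_abs]
        nlinarith [abs_nonneg y]
      have hgeo := hasSum_geometric_of_norm_lt_one hlt
      have hinj : Function.Injective (fun k : ℕ => 2 * k) := fun x y h => by simp only at h; omega
      have h0 : ∀ m, m ∉ Set.range (fun k : ℕ => 2 * k) → a m * y ^ m = 0 := by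
        intro m hm
        have : ¬ Even m := by
          intro ⟨r, hr⟩
          exact hm ⟨r, show 2 * r = m by omega⟩
        simp [ha, this]
      have hgeo' : HasSum ((fun m => a m * y ^ m) ∘ fun k : ℕ => 2 * k)
          ((1 - -y ^ 2)⁻¹) := by
        convert hgeo using 2 with k
        · rfl
        have hek : Even (2 * k) := ⟨k, by ring⟩
        simp only [Function.comp_apply, ha, if_pos hek, Nat.mul_div_cancel_left _ two_pos]
        rw [neg_pow (y ^ 2) k, ← pow_mul]
      have hsum := (Function.Injective.hasSum_iff hinj h0).mp hgeo'
      have hval : (1 - -y ^ 2)⁻¹ = f (0 + y) := by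
        rw [hf]; norm_num
      rw [hval] at hsum
      convert hsum using 2 with m
      · rfl
      rw [FormalMultilinearSeries.ofScalars_apply_eq, smul_eq_mul]
  have key : ∀ m, iteratedDeriv m f 0 = (Nat.factorial m : ℝ) * a m := by
    intro m
    have h1 := hps.factorial_smul (1 : ℝ) m
    rw [iteratedDeriv_eq_iteratedFDeriv, ← h1, FormalMultilinearSeries.ofScalars_apply_eq]
    simp [nsmul_eq_mul]
  rw [key n, key (n - 2)]
  have hn1 : ((n : ℝ) - 1) = ((n - 1 : ℕ) : ℝ) := by
    push_cast [Nat.cast_sub (by omega : 1 ≤ n)]; ring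
  have hfact : (Nat.factorial n : ℝ) = n * (n - 1 : ℕ) * Nat.factorial (n - 2) := by
    have : Nat.factorial n = n * (n - 1) * Nat.factorial (n - 2) := by
      rcases Nat.exists_eq_add_of_le hn with ⟨k, rfl⟩
      simp [Nat.factorial_succ, show 2 + k - 1 = k + 1 by omega, show 2 + k - 2 = k by omega,
        show 2 + k = k + 1 + 1 by omega]
      ring
    rw [this]; push_cast; ring
  by_cases he : Even n
  · have he2 : Even (n - 2) := by
      obtain ⟨r, hr⟩ := he; exact ⟨r - 1, by omega⟩
    have hdiv : n / 2 = (n - 2) / 2 + 1 := by omega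
    simp only [ha, if_pos he, if_pos he2, hdiv, pow_succ]
    rw [hn1, hfact]
    ring
  · have he2 : ¬ Even (n - 2) := by
      intro ⟨r, hr⟩; exact he ⟨r + 1, by omega⟩
    simp [ha, he, he2]
end

section
/- For every natural number n, the n-th derivative f_n of f(x) = 1/(1+x^2) tends to 0 as x → +∞. -/
open Polynomial Filter

theorem stmt_4 (f : ℝ → ℝ) (hf : ∀ x : ℝ, f x = 1 / (1 + x ^ 2)) (n : ℕ) :
    Filter.Tendsto (iteratedDeriv n f) Filter.atTop (nhds 0) := by
  have key : ∀ m : ℕ, ∃ P : Polynomial ℝ, P.natDegree ≤ m ∧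
      ∀ x, iteratedDeriv m f x = P.eval x / (1 + x ^ 2) ^ (m + 1) := by
    intro m
    induction m with
    | zero =>
      exact ⟨1, by simp, fun x => by simp [iteratedDeriv_zero, hf x]⟩
    | succ k ih =>
      obtain ⟨P, hdeg, hP⟩ := ih
      refine ⟨P.derivative * (1 + X ^ 2) - C ((2 : ℝ) * (k + 1)) * X * P, ?_, ?_⟩
      · apply le_trans (natDegree_sub_le _ _)
        apply max_le
        · rcases eq_or_ne P.derivative 0 with h | h
          · simp [h]
          · have h1 : 1 ≤ P.natDegree := by
              by_contra hc
              push_neg at hc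
              interval_cases h' : P.natDegree
              · exact h (derivative_of_natDegree_zero h')
            calc (P.derivative * (1 + X ^ 2)).natDegree
                ≤ P.derivative.natDegree + (1 + X ^ 2 : Polynomial ℝ).natDegree :=
                  natDegree_mul_le
              _ ≤ (P.natDegree - 1) + 2 := by
                  gcongr
                  · exact natDegree_derivative_le P
                  · compute_degree
              _ ≤ k + 1 := by omega
        · calc (C ((2 : ℝ) * (k + 1)) * X * P).natDegree
              ≤ (C ((2 : ℝ) * (k + 1)) * X).natDegree + P.natDegree := natDegree_mul_le
            _ ≤ 1 + k := by
                gcongr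
                compute_degree
            _ = k + 1 := by omega
      · intro x
        rw [iteratedDeriv_succ]
        have hfun : iteratedDeriv k f = fun y => P.eval y / (1 + y ^ 2) ^ (k + 1) :=
          funext hP
        rw [hfun]
        have h0 : (1 : ℝ) + x ^ 2 ≠ 0 := by positivity
        have h1 : HasDerivAt (fun y : ℝ => P.eval y) (P.derivative.eval x) x :=
          P.hasDerivAt x
        have hbase : HasDerivAt (fun y : ℝ => 1 + y ^ 2) (2 * x) x := by
          simpa using ((hasDerivAt_pow 2 x).const_add 1)
        have h2 : HasDerivAt (fun y : ℝ => (1 + y ^ 2) ^ (k + 1))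
            ((k + 1 : ℕ) * (1 + x ^ 2) ^ k * (2 * x)) x := by
          simpa using hbase.fun_pow (k + 1)
        have hd := (h1.fun_div h2 (by positivity)).deriv
        rw [hd]
        push_cast
        simp only [eval_sub, eval_mul, eval_add, eval_pow, eval_X, eval_C, eval_one]
        field_simp
        ring
  obtain ⟨P, hdeg, hP⟩ := key n
  have hQdeg : ((1 + X ^ 2 : Polynomial ℝ) ^ (n + 1)).degree = 2 * (n + 1) := by
    rw [degree_pow]
    have : (1 + X ^ 2 : Polynomial ℝ).degree = 2 := by compute_degree!
    rw [this]
    simp [mul_comm]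
  have hlt : P.degree < ((1 + X ^ 2 : Polynomial ℝ) ^ (n + 1)).degree := by
    rw [hQdeg]
    calc P.degree ≤ (P.natDegree : WithBot ℕ) := degree_le_natDegree
      _ ≤ (n : WithBot ℕ) := by exact_mod_cast hdeg
      _ < (2 * (n + 1) : ℕ) := by exact_mod_cast (by omega : n < 2 * (n + 1))
  have htend := Polynomial.div_tendsto_zero_of_degree_lt P _ hlt
  apply htend.congr
  intro x
  rw [hP x]
  simp
end

section
/- For every real z ≥ 0, one has ∫_0^∞ cos(xz)/(1+x^2) dx = (π/2) e^{-z}. -/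
open MeasureTheory Real Set Filter Complex

private lemma cexp_integrableOn_Ioi {c : ℂ} (hc : 0 < c.re) :
    IntegrableOn (fun y : ℝ => Complex.exp (-(c * y))) (Ioi (0:ℝ)) := by
  apply Integrable.mono' (exp_neg_integrableOn_Ioi 0 hc)
  · exact (Complex.continuous_exp.comp (by fun_prop)).aestronglyMeasurable
  · filter_upwards with y
    rw [Complex.norm_exp]
    simp [Complex.mul_re]

private lemma integral_cexp_Ioi {c : ℂ} (hc : 0 < c.re) :
    ∫ y in Ioi (0:ℝ), Complex.exp (-(c * y)) = 1 / c := by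
  have hc0 : c ≠ 0 := fun h => by simp [h] at hc
  have hderiv : ∀ y ∈ Ici (0:ℝ),
      HasDerivAt (fun y : ℝ => -Complex.exp (-(c * y)) / c) (Complex.exp (-(c * y))) y := by
    intro y _
    have h1 : HasDerivAt (fun w : ℂ => -Complex.exp (-(c * w)) / c)
        (Complex.exp (-(c * y))) (y : ℂ) := by
      have h0 : HasDerivAt (fun w : ℂ => -(c * w)) (-c) (y : ℂ) := by
        simpa using (hasDerivAt_id ((y:ℝ) : ℂ)).const_mul (-c)
      have := (h0.cexp.neg).div_const c
      refine this.congr_deriv ?_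
      rw [div_eq_iff hc0]; ring
    exact h1.comp_ofReal
  have htend : Tendsto (fun y : ℝ => -Complex.exp (-(c * y)) / c) atTop (nhds 0) := by
    have h1 : Tendsto (fun y : ℝ => Real.exp (-(c.re * y)) / ‖c‖) atTop (nhds 0) := by
      have h2 : Tendsto (fun y : ℝ => -(c.re * y)) atTop atBot := by
        apply Filter.tendsto_neg_atBot_iff.mpr
        exact (tendsto_const_mul_atTop_of_pos hc).mpr tendsto_id
      simpa using (Real.tendsto_exp_atBot.comp h2).div_const ‖c‖
    apply squeeze_zero_norm _ h1
    intro y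
    rw [norm_div, norm_neg, Complex.norm_exp]
    simp [Complex.mul_re]
  have := integral_Ioi_of_hasDerivAt_of_tendsto' hderiv (cexp_integrableOn_Ioi hc) htend
  rw [this]
  simp [neg_div, one_div]

private lemma exp_neg_abs_integrable : Integrable (fun y : ℝ => Real.exp (-|y|)) := by
  have h1 : IntegrableOn (fun v : ℝ => Real.exp (-|v|)) (Ioi (0:ℝ)) := by
    apply (exp_neg_integrableOn_Ioi 0 one_pos).congr_fun _ measurableSet_Ioi
    intro v hv
    show Real.exp (-1 * v) = Real.exp (-|v|)
    rw [abs_of_pos hv]; ring_nf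
  have h2 : IntegrableOn (fun v : ℝ => Real.exp (-|v|)) (Iic (0:ℝ)) := by
    have A : MeasurableEmbedding fun x : ℝ => -x :=
      (Homeomorph.neg ℝ).isClosedEmbedding.measurableEmbedding
    have h3 := A.integrableOn_map_iff (f := fun v : ℝ => Real.exp (-|v|))
      (s := Iic (0:ℝ)) (μ := volume)
    rw [Measure.map_neg_eq_self (volume : Measure ℝ)] at h3
    rw [h3]
    simp only [Function.comp_def, abs_neg]
    have : (fun x : ℝ => -x) ⁻¹' Iic (0:ℝ) = Ici 0 := by ext x; simp
    rw [this, integrableOn_Ici_iff_integrableOn_Ioi]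
    exact h1
  rw [← integrableOn_univ, ← Iic_union_Ioi (a := (0:ℝ))]
  exact h2.union h1

private lemma fourier_exp_neg_abs :
    FourierTransform.fourier (fun y : ℝ => ((Real.exp (-|y|) : ℝ) : ℂ))
      = fun x : ℝ => ((2 / (1 + (2*π*x)^2) : ℝ) : ℂ) := by
  ext x
  rw [Real.fourier_real_eq_integral_exp_smul]
  set c₁ : ℂ := 1 + 2*π*x*Complex.I with hc₁def
  set c₂ : ℂ := 1 - 2*π*x*Complex.I with hc₂def
  have hre₁ : c₁.re = 1 := by simp [hc₁def]
  have hre₂ : c₂.re = 1 := by simp [hc₂def]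
  have hc₁ : c₁ ≠ 0 := fun h => by rw [h] at hre₁; simp at hre₁
  have hc₂ : c₂ ≠ 0 := fun h => by rw [h] at hre₂; simp at hre₂
  have hint : Integrable (fun v : ℝ =>
      Complex.exp (↑(-2 * π * v * x) * Complex.I) • ((Real.exp (-|v|) : ℝ) : ℂ)) := by
    apply Integrable.mono' exp_neg_abs_integrable
    · apply Continuous.aestronglyMeasurable
      fun_prop
    · filter_upwards with v
      rw [smul_eq_mul, norm_mul, Complex.norm_exp,
        Complex.norm_real, Real.norm_eq_abs, _root_.abs_of_nonneg (Real.exp_nonneg _)]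
      simp [Complex.mul_re]
  rw [← intervalIntegral.integral_Iic_add_Ioi hint.integrableOn hint.integrableOn]
  have hIoi : ∫ v in Ioi (0:ℝ),
      Complex.exp (↑(-2 * π * v * x) * Complex.I) • ((Real.exp (-|v|) : ℝ) : ℂ) = 1 / c₁ := by
    rw [← integral_cexp_Ioi (c := c₁) (by rw [hre₁]; norm_num)]
    apply setIntegral_congr_fun measurableSet_Ioi
    intro v hv
    show Complex.exp (↑(-2 * π * v * x) * Complex.I) • ((Real.exp (-|v|) : ℝ) : ℂ)
      = Complex.exp (-(c₁ * v))
    rw [smul_eq_mul, abs_of_pos hv, Complex.ofReal_exp, ← Complex.exp_add, hc₁def]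
    congr 1
    push_cast
    ring
  have hIic : ∫ v in Iic (0:ℝ),
      Complex.exp (↑(-2 * π * v * x) * Complex.I) • ((Real.exp (-|v|) : ℝ) : ℂ) = 1 / c₂ := by
    have h4 := integral_comp_neg_Ioi (0:ℝ) (fun v : ℝ =>
      Complex.exp (↑(-2 * π * v * x) * Complex.I) • ((Real.exp (-|v|) : ℝ) : ℂ))
    rw [neg_zero] at h4
    rw [← h4, ← integral_cexp_Ioi (c := c₂) (by rw [hre₂]; norm_num)]
    apply setIntegral_congr_fun measurableSet_Ioi
    intro v hv
    simp only [abs_neg]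
    rw [smul_eq_mul, abs_of_pos hv, Complex.ofReal_exp, ← Complex.exp_add, hc₂def]
    congr 1
    push_cast
    ring
  rw [hIoi, hIic]
  have hprod : c₂ * c₁ = ((1 + (2*π*x)^2 : ℝ) : ℂ) := by
    rw [hc₁def, hc₂def]
    push_cast
    ring_nf
    rw [Complex.I_sq]
    ring
  rw [div_add_div _ _ hc₂ hc₁, hprod, one_mul, mul_one]
  have : c₁ + c₂ = (2 : ℂ) := by rw [hc₁def, hc₂def]; ring
  rw [this]
  push_cast
  ring

theorem stmt_6 (z : ℝ) (hz : 0 ≤ z) :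
    ∫ x in Set.Ioi (0 : ℝ), Real.cos (x * z) / (1 + x ^ 2)
      = (Real.pi / 2) * Real.exp (-z) := by
  set f : ℝ → ℂ := fun y => ((Real.exp (-|y|) : ℝ) : ℂ) with hf
  have hf_cont : Continuous f := by fun_prop
  have hf_int : Integrable f := exp_neg_abs_integrable.ofReal
  have hFr_int : Integrable (fun x : ℝ => (2 / (1 + (2*π*x)^2) : ℝ)) := by
    have h0 : Integrable (fun u : ℝ => 2 * (1 + u^2)⁻¹) := integrable_inv_one_add_sq.const_mul 2
    have h1 := h0.comp_mul_left' (R := 2*π) (by positivity)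
    apply h1.congr
    filter_upwards with x
    rw [div_eq_mul_inv]
  have hFf : FourierTransform.fourier f = fun x : ℝ => ((2 / (1 + (2*π*x)^2) : ℝ) : ℂ) :=
    fourier_exp_neg_abs
  have hFf_int : Integrable (FourierTransform.fourier f) := by rw [hFf]; exact hFr_int.ofReal
  have h5 : FourierTransform.fourierInv (FourierTransform.fourier f) z = f z :=
    congrFun (hf_cont.fourierInv_fourier_eq hf_int hFf_int) z
  rw [Real.fourierInv_eq_fourier_neg,
    Real.fourier_real_eq_integral_exp_smul] at h5
  simp only [hFf] at h5
  -- h5 : ∫ v, cexp (↑(-2*π*v*(-z)) * I) • ↑(2/(1+(2*π*v)^2)) = f z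
  have hGc_int : Integrable (fun v : ℝ =>
      Complex.exp (↑(-2*π*v*(-z)) * Complex.I) • ((2/(1+(2*π*v)^2) : ℝ) : ℂ)) := by
    apply Integrable.mono' hFr_int
    · apply Continuous.aestronglyMeasurable
      have hcd : Continuous fun v : ℝ => (2/(1+(2*π*v)^2) : ℝ) := by
        apply Continuous.div continuous_const (by fun_prop) (fun x => by positivity)
      exact (Complex.continuous_exp.comp (by fun_prop)).smul
        (Complex.continuous_ofReal.comp hcd)
    · filter_upwards with v
      rw [smul_eq_mul, norm_mul, Complex.norm_exp,
        Complex.norm_real, Real.norm_eq_abs]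
      have h7 : (0:ℝ) < 2/(1+(2*π*v)^2) := by positivity
      rw [_root_.abs_of_pos h7]
      simp [Complex.mul_re]
  have h6 := integral_re hGc_int
  rw [h5] at h6
  simp only [RCLike.re_to_complex, smul_eq_mul, Complex.mul_re, Complex.exp_ofReal_mul_I_re,
    Complex.exp_ofReal_mul_I_im, Complex.ofReal_re, Complex.ofReal_im, mul_zero, sub_zero,
    hf, Complex.ofReal_re] at h6
  rw [_root_.abs_of_nonneg hz] at h6
  -- h6 : ∫ v, cos (-2*π*v*(-z)) * (2/(1+(2*π*v)^2)) = rexp (-z)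
  set G : ℝ → ℝ := fun u => Real.cos (u*z) * (2/(1+u^2)) with hG
  have h8 : ∀ v : ℝ, Real.cos (-2*π*v*(-z)) * (2/(1+(2*π*v)^2)) = G (2*π*v) := by
    intro v
    rw [hG]
    congr 2
    ring
  simp_rw [h8] at h6
  have h9 := MeasureTheory.Measure.integral_comp_mul_left G (2*π)
  rw [h6] at h9
  -- h9 : rexp (-z) = |(2*π)⁻¹| • ∫ u, G u
  have hGint : Integrable G := by
    apply Integrable.mono' (integrable_inv_one_add_sq.const_mul 2)
    · apply Continuous.aestronglyMeasurable
      apply Continuous.mul (by fun_prop)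
      apply Continuous.div continuous_const (by fun_prop) (fun x => by positivity)
    · filter_upwards with u
      rw [hG]
      have h7 : (0:ℝ) < 2/(1+u^2) := by positivity
      rw [norm_mul, Real.norm_eq_abs, Real.norm_eq_abs, _root_.abs_of_pos h7]
      calc |Real.cos (u*z)| * (2/(1+u^2)) ≤ 1 * (2/(1+u^2)) :=
            mul_le_mul_of_nonneg_right (Real.abs_cos_le_one _) h7.le
        _ = 2 * (1+u^2)⁻¹ := by rw [one_mul, div_eq_mul_inv]
  have hGeven : ∀ x : ℝ, G (-x) = G x := by
    intro x
    rw [hG]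
    simp [neg_mul, Real.cos_neg, neg_sq]
  have h10 : ∫ u, G u = 2 * ∫ u in Ioi (0:ℝ), G u := by
    rw [← intervalIntegral.integral_Iic_add_Ioi hGint.integrableOn hGint.integrableOn]
    have h4 := integral_comp_neg_Ioi (0:ℝ) G
    rw [neg_zero] at h4
    simp_rw [hGeven] at h4
    rw [← h4]
    ring
  have h11 : ∫ u in Ioi (0:ℝ), G u
      = 2 * ∫ x in Ioi (0:ℝ), Real.cos (x * z) / (1 + x ^ 2) := by
    rw [← MeasureTheory.integral_const_mul]
    apply setIntegral_congr_fun measurableSet_Ioi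
    intro x _
    rw [hG]
    ring
  rw [h10, h11] at h9
  rw [smul_eq_mul, _root_.abs_of_pos (by positivity : (0:ℝ) < (2*π)⁻¹)] at h9
  have hπ : (0:ℝ) < π := Real.pi_pos
  have h12 : Real.exp (-z) * (2*π) = 2 * (2 * ∫ x in Ioi (0:ℝ), Real.cos (x * z) / (1 + x ^ 2)) := by
    field_simp at h9 ⊢
    linarith [h9]
  nlinarith [h12]
end

section
/- For every natural number n and every real x, the n-th derivative of f(x) = 1/(1+x^2) admits the representation f_n(x) = ∫_0^∞ z^n e^{-z} cos(xz + nπ/2) dz. -/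
open MeasureTheory Set Complex Filter

lemma aux_int (n : ℕ) (x : ℝ) :
    IntegrableOn (fun t : ℝ => (t : ℂ) ^ n * Complex.exp (-((1 - Complex.I * x) * t)))
      (Set.Ioi 0) := by
  have hg : IntegrableOn (fun t : ℝ => t ^ (n : ℝ) * Real.exp (-1 * t ^ (1 : ℝ)))
      (Set.Ioi 0) :=
    integrableOn_rpow_mul_exp_neg_mul_rpow
      (lt_of_lt_of_le neg_one_lt_zero (Nat.cast_nonneg n)) one_pos one_pos
  refine Integrable.mono' hg ?_ ?_
  · apply Continuous.aestronglyMeasurable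
    continuity
  · filter_upwards [ae_restrict_mem measurableSet_Ioi] with t ht
    have ht0 : (0:ℝ) < t := ht
    have h1 : ‖(t : ℂ) ^ n * Complex.exp (-((1 - Complex.I * x) * t))‖
        = t ^ n * Real.exp (-t) := by
      simp [Complex.norm_exp, abs_of_pos ht0]
    rw [h1, Real.rpow_one, Real.rpow_natCast, neg_one_mul]

lemma aux_J (x : ℝ) : ∀ n : ℕ,
    (∫ t in Set.Ioi (0:ℝ), (t : ℂ) ^ n * Complex.exp (-((1 - Complex.I * x) * t)))
      = (n.factorial : ℂ) / (1 - Complex.I * x) ^ (n + 1) := by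
  set a : ℂ := 1 - Complex.I * x with ha_def
  have hre : a.re = 1 := by simp [ha_def]
  have ha : a ≠ 0 := by
    intro h
    rw [h] at hre
    simp at hre
  have hderiv_exp : ∀ t : ℝ, HasDerivAt (fun t : ℝ => Complex.exp (-(a * t)))
      (-a * Complex.exp (-(a * t))) t := by
    intro t
    have h1 : HasDerivAt (fun t : ℝ => (t : ℂ)) 1 t := Complex.ofRealCLM.hasDerivAt
    have h2 : HasDerivAt (fun t : ℝ => -(a * (t:ℂ))) (-a) t := by
      simpa using (h1.const_mul a).fun_neg
    simpa [mul_comm] using h2.cexp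
  have hnorm : ∀ t : ℝ, 0 < t → ∀ m : ℕ, ‖(t : ℂ) ^ m * Complex.exp (-(a * t))‖
      = t ^ m * Real.exp (-t) := by
    intro t ht0 m
    simp [ha_def, Complex.norm_exp, abs_of_pos ht0]
  intro n
  induction n with
  | zero =>
    have key := integral_Ioi_of_hasDerivAt_of_tendsto'
      (f := fun t : ℝ => -(Complex.exp (-(a * t)) / a))
      (f' := fun t : ℝ => Complex.exp (-(a * t))) (a := 0)
      (fun t _ => by
        have := ((hderiv_exp t).div_const a).fun_neg
        convert this using 1
        field_simp)
      (by simpa using aux_int 0 x)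
      (by
        have h0 : Tendsto (fun t : ℝ => Complex.exp (-(a * t))) atTop (nhds 0) := by
          rw [tendsto_zero_iff_norm_tendsto_zero]
          have he : ∀ᶠ t : ℝ in atTop, ‖Complex.exp (-(a * t))‖ = Real.exp (-t) := by
            filter_upwards [eventually_gt_atTop 0] with t ht
            simpa using hnorm t ht 0
          rw [tendsto_congr' he]
          exact Real.tendsto_exp_neg_atTop_nhds_zero
        simpa using (h0.div_const a).neg)
    simpa [ha_def] using key
  | succ n IH =>
    have key := integral_Ioi_of_hasDerivAt_of_tendsto'
      (f := fun t : ℝ => (t : ℂ) ^ (n + 1) * Complex.exp (-(a * t)))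
      (f' := fun t : ℝ => ((n : ℂ) + 1) * ((t : ℂ) ^ n * Complex.exp (-(a * t)))
        - a * ((t : ℂ) ^ (n + 1) * Complex.exp (-(a * t)))) (a := 0)
      (fun t _ => by
        have hp : HasDerivAt (fun t : ℝ => (t : ℂ) ^ (n + 1))
            ((((n:ℕ) + 1 : ℕ) : ℂ) * (t : ℂ) ^ n) t := by
          simpa using (hasDerivAt_pow (n + 1) ((t : ℝ) : ℂ)).comp_ofReal
        have := hp.fun_mul (hderiv_exp t)
        refine this.congr_deriv ?_
        push_cast
        ring)
      (by
        have := ((aux_int n x).const_mul ((n : ℂ) + 1)).sub ((aux_int (n+1) x).const_mul a)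
        exact this)
      (by
        rw [tendsto_zero_iff_norm_tendsto_zero]
        apply squeeze_zero_norm' (a := fun t : ℝ => t ^ (n+1) * Real.exp (-t))
        · filter_upwards [eventually_gt_atTop 0] with t ht
          rw [norm_norm, hnorm t ht (n+1)]
        · exact Real.tendsto_pow_mul_exp_neg_atTop_nhds_zero (n+1)
      )
    rw [integral_sub (((aux_int n x).const_mul ((n : ℂ) + 1)))
        (((aux_int (n+1) x).const_mul a)),
      integral_const_mul, integral_const_mul, IH] at key
    simp only [Complex.ofReal_zero, ne_eq, zero_pow, Nat.succ_ne_zero, not_false_iff,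
      zero_mul, mul_zero, sub_zero] at key
    have h2 : ((n:ℂ)+1) * ((n.factorial : ℂ) / a ^ (n + 1)) - a *
        (∫ t in Set.Ioi (0:ℝ), (t : ℂ) ^ (n+1) * Complex.exp (-(a * t))) = 0 := by
      simpa [← ha_def] using key
    have h3 : (∫ t in Set.Ioi (0:ℝ), (t : ℂ) ^ (n+1) * Complex.exp (-(a * t)))
        = ((n:ℂ)+1) * (n.factorial : ℂ) / a ^ (n + 2) := by
      have h4 := sub_eq_zero.mp h2
      field_simp at h4 ⊢
      linear_combination -h4
    rw [h3]
    push_cast [Nat.factorial_succ]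
    ring

lemma aux_ne (x : ℝ) : (1 - Complex.I * x) ≠ 0 := by
  intro h
  have : (1 - Complex.I * x).re = 1 := by simp
  rw [h] at this
  simp at this

lemma aux_D (n : ℕ) : iteratedDeriv n (fun x : ℝ => 1 / (1 + x ^ 2))
    = fun x : ℝ => (Complex.I ^ n * (n.factorial : ℂ) / (1 - Complex.I * x) ^ (n + 1)).re := by
  induction n with
  | zero =>
    funext x
    simp only [iteratedDeriv_zero, pow_zero, Nat.factorial_zero, Nat.cast_one, one_mul,
      zero_add, pow_one]
    simp only [one_div]
    rw [Complex.inv_re]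
    simp [Complex.normSq_apply]
    ring_nf
  | succ n IH =>
    funext x
    rw [iteratedDeriv_succ, IH]
    have hne := aux_ne x
    have h0 : HasDerivAt (fun x : ℝ => 1 - Complex.I * x) (-Complex.I) x := by
      simpa using ((Complex.ofRealCLM.hasDerivAt.const_mul Complex.I).const_sub 1)
    have hp : HasDerivAt (fun x : ℝ => (1 - Complex.I * x) ^ (n + 1))
        ((((n:ℕ) + 1 : ℕ) : ℂ) * (1 - Complex.I * x) ^ n * (-Complex.I)) x := by
      have := HasDerivAt.comp x (hasDerivAt_pow (n + 1) (1 - Complex.I * x)) h0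
      simpa [Function.comp_def] using this
    have hinv := HasDerivAt.comp x (hasDerivAt_inv (x := (1 - Complex.I * x) ^ (n+1)) (pow_ne_zero (n+1) hne)) hp
    have hmul := hinv.const_mul (Complex.I ^ n * (n.factorial : ℂ))
    have hre := Complex.reCLM.hasFDerivAt.comp_hasDerivAt x hmul
    have heq : (Complex.I ^ n * (n.factorial : ℂ)) *
        (-(((1 - Complex.I * x) ^ (n + 1)) ^ 2)⁻¹ *
          ((((n:ℕ) + 1 : ℕ) : ℂ) * (1 - Complex.I * x) ^ n * (-Complex.I)))
        = Complex.I ^ (n + 1) * ((n + 1).factorial : ℂ) / (1 - Complex.I * x) ^ (n + 1 + 1) := by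
      push_cast [Nat.factorial_succ]
      field_simp
      ring
    have hfun : (fun x : ℝ => (Complex.I ^ n * (n.factorial : ℂ) /
        (1 - Complex.I * x) ^ (n + 1)).re)
        = fun x : ℝ => Complex.reCLM ((Complex.I ^ n * (n.factorial : ℂ)) *
            ((1 - Complex.I * x) ^ (n + 1))⁻¹) := by
      funext y
      simp [div_eq_mul_inv]
    rw [hfun]
    have := hre.deriv
    simp only [Function.comp_def] at this
    rw [this, ← heq]
    simp [div_eq_mul_inv]

lemma aux_pt (n : ℕ) (x z : ℝ) :
    (Complex.I ^ n * ((z : ℂ) ^ n * Complex.exp (-((1 - Complex.I * x) * z)))).re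
      = z ^ n * Real.exp (-z) * Real.cos (x * z + n * Real.pi / 2) := by
  have hI2 : Complex.exp (((Real.pi / 2 : ℝ) : ℂ) * Complex.I) = Complex.I := by
    rw [Complex.exp_mul_I, ← Complex.ofReal_cos, ← Complex.ofReal_sin,
      Real.cos_pi_div_two, Real.sin_pi_div_two]
    simp
  have hI : Complex.I ^ n = Complex.exp (((n * Real.pi / 2 : ℝ) : ℂ) * Complex.I) := by
    rw [show ((n * Real.pi / 2 : ℝ) : ℂ) * Complex.I
        = n * (((Real.pi / 2 : ℝ) : ℂ) * Complex.I) by push_cast; ring,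
      Complex.exp_nat_mul, hI2]
  have hz : Complex.I ^ n * ((z : ℂ) ^ n * Complex.exp (-((1 - Complex.I * x) * z)))
      = ((z ^ n * Real.exp (-z) : ℝ) : ℂ)
        * Complex.exp (((x * z + n * Real.pi / 2 : ℝ) : ℂ) * Complex.I) := by
    rw [hI]
    have h1 : ((n * Real.pi / 2 : ℝ) : ℂ) * Complex.I + -((1 - Complex.I * x) * z)
        = ((-z : ℝ) : ℂ) + ((x * z + n * Real.pi / 2 : ℝ) : ℂ) * Complex.I := by
      push_cast; ring
    calc Complex.exp (((n * Real.pi / 2 : ℝ) : ℂ) * Complex.I)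
          * ((z : ℂ) ^ n * Complex.exp (-((1 - Complex.I * x) * z)))
        = (z : ℂ) ^ n * Complex.exp (((n * Real.pi / 2 : ℝ) : ℂ) * Complex.I
            + -((1 - Complex.I * x) * z)) := by rw [Complex.exp_add]; ring
      _ = _ := by
          rw [h1, Complex.exp_add, ← Complex.ofReal_exp]
          push_cast
          ring
  rw [hz, Complex.re_ofReal_mul, Complex.exp_ofReal_mul_I_re]

theorem stmt_7 (f : ℝ → ℝ) (hf : ∀ x : ℝ, f x = 1 / (1 + x ^ 2)) (n : ℕ) (x : ℝ) :
    iteratedDeriv n f x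
      = ∫ z in Set.Ioi (0 : ℝ), z ^ n * Real.exp (-z) * Real.cos (x * z + n * Real.pi / 2) := by
  have hfe : f = fun x : ℝ => 1 / (1 + x ^ 2) := funext hf
  rw [hfe, aux_D]
  have hcongr : ∫ z in Set.Ioi (0 : ℝ), z ^ n * Real.exp (-z)
        * Real.cos (x * z + n * Real.pi / 2)
      = ∫ z in Set.Ioi (0 : ℝ),
          (Complex.I ^ n * ((z : ℂ) ^ n * Complex.exp (-((1 - Complex.I * x) * z)))).re := by
    refine setIntegral_congr_fun measurableSet_Ioi (fun z _ => ?_)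
    exact (aux_pt n x z).symm
  rw [hcongr]
  have hint := (aux_int n x).const_mul (Complex.I ^ n)
  have hcomm := ContinuousLinearMap.integral_comp_comm Complex.reCLM hint
  simp only [Complex.reCLM_apply] at hcomm
  rw [hcomm, integral_const_mul, aux_J x n]
  simp [mul_div_assoc]
end

section
/- For all natural numbers m and n with n ≥ 1, the integrals I_{m,n} satisfy the recurrence I_{m,n} = -f_m(0) f_{n-1}(0) - I_{m+1,n-1}. -/
open Polynomial Set MeasureTheory Filter

private lemma myContDiff : ContDiff ℝ ⊤ (fun x : ℝ => 1 / (1 + x ^ 2)) := by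
  apply ContDiff.div contDiff_const (by fun_prop)
  intro x; positivity

private lemma myRep (k : ℕ) : ∃ p : Polynomial ℝ, p.natDegree ≤ k + 1 ∧
    ∀ x : ℝ, iteratedDeriv k (fun x : ℝ => 1 / (1 + x ^ 2)) x
      = p.eval x / (1 + x ^ 2) ^ (k + 1) := by
  induction k with
  | zero =>
    exact ⟨1, by simp, fun x => by simp⟩
  | succ k ih =>
    obtain ⟨p, hdeg, hp⟩ := ih
    refine ⟨Polynomial.derivative p * (1 + X ^ 2) - C ((2 : ℝ) * (k + 1)) * X * p,
      ?_, fun x => ?_⟩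
    · refine le_trans (natDegree_sub_le _ _) (max_le ?_ ?_)
      · refine le_trans (natDegree_mul_le) ?_
        have h1 : (Polynomial.derivative p).natDegree ≤ k := by
          have := natDegree_derivative_le p
          omega
        have h2 : ((1 : ℝ[X]) + X ^ 2).natDegree ≤ 2 := by
          refine le_trans (natDegree_add_le _ _) ?_
          simp [natDegree_X_pow]
        omega
      · refine le_trans (natDegree_mul_le) ?_
        have h2 : ((C ((2:ℝ) * (k+1))) * X).natDegree ≤ 1 := by
          refine le_trans (natDegree_mul_le) ?_
          rw [natDegree_C, natDegree_X]
        omega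
    · have hne : (1 + x ^ 2) ≠ 0 := by positivity
      have hu : HasDerivAt (fun x : ℝ => p.eval x) (p.derivative.eval x) x :=
        p.hasDerivAt x
      have h1 : HasDerivAt (fun x : ℝ => 1 + x ^ 2) (2 * x) x := by
        simpa using ((hasDerivAt_pow 2 x).const_add 1)
      have hv : HasDerivAt (fun x : ℝ => (1 + x ^ 2) ^ (k + 1))
          ((k + 1 : ℕ) * (1 + x ^ 2) ^ k * (2 * x)) x := by
        simpa using h1.fun_pow (k + 1)
      have hd : HasDerivAt (fun x : ℝ => p.eval x / (1 + x ^ 2) ^ (k + 1))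
          ((p.derivative.eval x * (1 + x ^ 2) ^ (k + 1)
            - p.eval x * ((k + 1 : ℕ) * (1 + x ^ 2) ^ k * (2 * x)))
            / ((1 + x ^ 2) ^ (k + 1)) ^ 2) x :=
        hu.div hv (pow_ne_zero _ hne)
      rw [iteratedDeriv_succ]
      have : deriv (iteratedDeriv k (fun x : ℝ => 1 / (1 + x ^ 2))) x
          = deriv (fun x : ℝ => p.eval x / (1 + x ^ 2) ^ (k + 1)) x := by
        congr 1; funext y; exact hp y
      rw [this, hd.deriv]
      simp only [eval_sub, eval_mul, eval_add, eval_one, eval_pow, eval_X, eval_C]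
      field_simp
      push_cast
      ring

private lemma myAbsPow (x : ℝ) (i j : ℕ) (h : i ≤ 2 * j) : |x| ^ i ≤ (1 + x ^ 2) ^ j := by
  calc |x| ^ i ≤ (max 1 |x|) ^ i := by
        exact pow_le_pow_left₀ (abs_nonneg x) (le_max_right _ _) i
    _ ≤ (max 1 |x|) ^ (2 * j) := by
        apply pow_le_pow_right₀ (le_max_left _ _) h
    _ = ((max 1 |x|) ^ 2) ^ j := by rw [← pow_mul]
    _ ≤ (1 + x ^ 2) ^ j := by
        apply pow_le_pow_left₀ (by positivity)
        rcases max_cases 1 |x| with ⟨h1, _⟩ | ⟨h1, _⟩ <;> rw [h1] <;>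
          nlinarith [sq_abs x, sq_nonneg x]

private lemma myPolyBound (p : ℝ[X]) (j : ℕ) (h : p.natDegree ≤ 2 * j) :
    ∃ C : ℝ, ∀ x : ℝ, |p.eval x| ≤ C * (1 + x ^ 2) ^ j := by
  refine ⟨∑ i ∈ Finset.range (p.natDegree + 1), |p.coeff i|, fun x => ?_⟩
  rw [eval_eq_sum_range, Finset.sum_mul]
  refine le_trans (Finset.abs_sum_le_sum_abs _ _) (Finset.sum_le_sum fun i hi => ?_)
  rw [abs_mul, abs_pow]
  have hij : i ≤ 2 * j := by
    have := Finset.mem_range.mp hi; omega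
  exact mul_le_mul_of_nonneg_left (myAbsPow x i j hij) (abs_nonneg _)

private lemma myIntegrable (p : ℝ[X]) (K : ℕ) (h : p.natDegree + 2 ≤ 2 * K) :
    IntegrableOn (fun x : ℝ => p.eval x / (1 + x ^ 2) ^ K) (Ioi 0) := by
  obtain ⟨K', rfl⟩ : ∃ K', K = K' + 1 := ⟨K - 1, by omega⟩
  obtain ⟨C, hC⟩ := myPolyBound p K' (by omega)
  have hcont : Continuous (fun x : ℝ => p.eval x / (1 + x ^ 2) ^ (K' + 1)) := by
    apply Continuous.div (p.continuous_aeval) (by continuity)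
    intro x; positivity
  refine Integrable.mono' ((integrable_inv_one_add_sq.const_mul C).restrict)
    hcont.aestronglyMeasurable ?_
  refine ae_of_all _ fun x => ?_
  have h1 : (0:ℝ) < 1 + x ^ 2 := by positivity
  rw [Real.norm_eq_abs, abs_div, abs_pow, abs_of_pos h1, pow_succ, div_mul_eq_div_div,
    div_le_iff₀ (by positivity), div_le_iff₀ (by positivity)]
  calc |p.eval x| ≤ C * (1 + x ^ 2) ^ K' := hC x
    _ = C * (1 + x ^ 2)⁻¹ * (1 + x ^ 2) * (1 + x ^ 2) ^ K' := by
        field_simp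
    _ ≤ _ := by ring_nf; rfl

private lemma myTendsto (p : ℝ[X]) (K : ℕ) (h : p.natDegree + 1 ≤ 2 * K) :
    Tendsto (fun x : ℝ => p.eval x / (1 + x ^ 2) ^ K) atTop (nhds 0) := by
  have hq0 : (1 + X ^ 2 : ℝ[X]) ≠ 0 := by
    intro hc
    have := congrArg (fun q => Polynomial.eval (0:ℝ) q) hc
    simp at this
  have hdq : ((1 + X ^ 2 : ℝ[X]) ^ K).degree = (2 * K : ℕ) := by
    rw [degree_eq_natDegree (pow_ne_zero _ hq0), natDegree_pow]
    have : (1 + X ^ 2 : ℝ[X]).natDegree = 2 := by compute_degree!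
    rw [this]; push_cast; ring
  have hlt : p.degree < ((1 + X ^ 2 : ℝ[X]) ^ K).degree := by
    rw [hdq]
    calc p.degree ≤ (p.natDegree : WithBot ℕ) := degree_le_natDegree
      _ < ((2 * K : ℕ) : WithBot ℕ) := by exact_mod_cast (by omega : p.natDegree < 2 * K)
  have := Polynomial.div_tendsto_zero_of_degree_lt p _ hlt
  refine this.congr fun x => by simp

theorem stmt_9 (f : ℝ → ℝ) (hf : ∀ x : ℝ, f x = 1 / (1 + x ^ 2))
    (I : ℕ → ℕ → ℝ)
    (hI : ∀ m n : ℕ, I m n = ∫ x in Set.Ioi (0 : ℝ), iteratedDeriv m f x * iteratedDeriv n f x)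
    (m n : ℕ) (hn : 1 ≤ n) :
    I m n = -(iteratedDeriv m f 0 * iteratedDeriv (n - 1) f 0) - I (m + 1) (n - 1) := by
  have hfeq : f = fun x : ℝ => 1 / (1 + x ^ 2) := funext hf
  subst hfeq
  set f := fun x : ℝ => 1 / (1 + x ^ 2) with hfdef
  -- product representation
  have prodRep : ∀ a b : ℕ, ∃ r : ℝ[X], r.natDegree ≤ a + b + 2 ∧
      ∀ x : ℝ, iteratedDeriv a f x * iteratedDeriv b f x
        = r.eval x / (1 + x ^ 2) ^ (a + b + 2) := by
    intro a b
    obtain ⟨p, hp1, hp2⟩ := myRep a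
    obtain ⟨q, hq1, hq2⟩ := myRep b
    refine ⟨p * q, le_trans natDegree_mul_le (by omega), fun x => ?_⟩
    rw [hp2 x, hq2 x, div_mul_div_comm, ← pow_add, eval_mul]
    congr 2
    omega
  have hint : ∀ a b : ℕ,
      IntegrableOn (fun x : ℝ => iteratedDeriv a f x * iteratedDeriv b f x) (Ioi 0) := by
    intro a b
    obtain ⟨r, hr1, hr2⟩ := prodRep a b
    exact (myIntegrable r (a + b + 2) (by omega)).congr_fun (fun x _ => (hr2 x).symm)
      measurableSet_Ioi
  have htend : ∀ a b : ℕ,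
      Tendsto (fun x : ℝ => iteratedDeriv a f x * iteratedDeriv b f x) atTop (nhds 0) := by
    intro a b
    obtain ⟨r, hr1, hr2⟩ := prodRep a b
    exact (myTendsto r (a + b + 2) (by omega)).congr fun x => (hr2 x).symm
  have hderiv : ∀ (k : ℕ) (x : ℝ),
      HasDerivAt (iteratedDeriv k f) (iteratedDeriv (k + 1) f x) x := by
    intro k x
    have hd : Differentiable ℝ (iteratedDeriv k f) :=
      myContDiff.differentiable_iteratedDeriv k (by simp)
    have := (hd x).hasDerivAt
    rwa [iteratedDeriv_succ] at *
  obtain ⟨n', rfl⟩ : ∃ n', n = n' + 1 := ⟨n - 1, by omega⟩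
  have hsub : n' + 1 - 1 = n' := rfl
  rw [hsub, hI m (n' + 1), hI (m + 1) n']
  have key : (∫ x in Ioi (0:ℝ),
      (iteratedDeriv (m + 1) f x * iteratedDeriv n' f x
        + iteratedDeriv m f x * iteratedDeriv (n' + 1) f x))
      = 0 - iteratedDeriv m f 0 * iteratedDeriv n' f 0 := by
    refine integral_Ioi_of_hasDerivAt_of_tendsto'
      (fun x _ => (hderiv m x).mul (hderiv n' x)) ?_ (htend m n')
    exact ((hint (m + 1) n').add (hint m (n' + 1)))
  rw [MeasureTheory.integral_add (hint (m + 1) n') (hint m (n' + 1))] at key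
  linarith
end

section
/- For every natural number n, the diagonal integral satisfies I_{n,n} = ∫_0^∞ (f_n(x))^2 dx = (2n)! · π / 2^{2n+2}. -/
open Complex MeasureTheory Set Filter Real



lemma aux_ne1 (x : ℝ) : (x : ℂ) + I ≠ 0 := by
  intro h; have := congrArg Complex.im h; simp at this

lemma aux_ne2 (x : ℝ) : (x : ℂ) - I ≠ 0 := by
  intro h; have := congrArg Complex.im h; simp at this

lemma aux_pos (x : ℝ) : (0:ℝ) < 1 + x ^ 2 := by positivity

lemma hdA (k : ℕ) (x : ℝ) :
    HasDerivAt (fun z : ℂ => ((z + I) ^ (k+1))⁻¹)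
      (-(k+1) * (((x:ℂ) + I) ^ (k+2))⁻¹) (x:ℂ) := by
  have h0 : ((x:ℂ) + I) ^ (k+1) ≠ 0 := pow_ne_zero _ (aux_ne1 x)
  have h1 : HasDerivAt (fun z : ℂ => (z + I) ^ (k+1))
      ((k+1) * ((x:ℂ) + I) ^ k * 1) (x:ℂ) := by
    simpa using ((hasDerivAt_id (x:ℂ)).add_const I).fun_pow (k+1)
  refine (h1.inv h0).congr_deriv ?_
  have hne := aux_ne1 x
  field_simp; ring

lemma hdB (k : ℕ) (x : ℝ) :
    HasDerivAt (fun z : ℂ => ((z - I) ^ (k+1))⁻¹)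
      (-(k+1) * (((x:ℂ) - I) ^ (k+2))⁻¹) (x:ℂ) := by
  have h0 : ((x:ℂ) - I) ^ (k+1) ≠ 0 := pow_ne_zero _ (aux_ne2 x)
  have h1 : HasDerivAt (fun z : ℂ => (z - I) ^ (k+1))
      ((k+1) * ((x:ℂ) - I) ^ k * 1) (x:ℂ) := by
    simpa using ((hasDerivAt_id (x:ℂ)).sub_const I).fun_pow (k+1)
  refine (h1.inv h0).congr_deriv ?_
  have hne := aux_ne2 x
  field_simp; ring

lemma hdD (n : ℕ) (x : ℝ) :
    HasDerivAt (fun z : ℂ => I/2 * (-1)^n * (n.factorial : ℂ) *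
        (((z + I) ^ (n+1))⁻¹ - ((z - I) ^ (n+1))⁻¹))
      (I/2 * (-1)^(n+1) * ((n+1).factorial : ℂ) *
        ((((x:ℂ) + I) ^ (n+2))⁻¹ - (((x:ℂ) - I) ^ (n+2))⁻¹)) (x:ℂ) := by
  refine (((hdA n x).sub (hdB n x)).const_mul (I/2 * (-1)^n * (n.factorial : ℂ))).congr_deriv ?_
  push_cast [Nat.factorial_succ]
  ring

lemma key1 (f : ℝ → ℝ) (hf : ∀ x : ℝ, f x = 1 / (1 + x ^ 2)) (n : ℕ) (x : ℝ) :
    iteratedDeriv n f x = (I/2 * (-1)^n * (n.factorial : ℂ) *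
      ((((x:ℂ) + I) ^ (n+1))⁻¹ - (((x:ℂ) - I) ^ (n+1))⁻¹)).re := by
  induction n generalizing x with
  | zero =>
    rw [iteratedDeriv_zero, hf]
    have : I/2 * (-1)^0 * ((Nat.factorial 0 : ℕ) : ℂ) *
        ((((x:ℂ) + I) ^ (0+1))⁻¹ - (((x:ℂ) - I) ^ (0+1))⁻¹)
        = ((1 / (1 + x^2) : ℝ) : ℂ) := by
      have h1 := aux_ne1 x
      have h2 := aux_ne2 x
      have h3 : ((1:ℂ) + (x:ℂ)^2) ≠ 0 := by
        have : ((1:ℂ) + (x:ℂ)^2) = ((1 + x^2 : ℝ) : ℂ) := by push_cast; ring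
        rw [this]
        exact_mod_cast ne_of_gt (aux_pos x)
      push_cast
      field_simp
      ring_nf
      rw [Complex.I_sq]
      ring
    rw [this, Complex.ofReal_re]
  | succ n ih =>
    rw [iteratedDeriv_succ]
    have hfun : iteratedDeriv n f = fun y : ℝ =>
        (I/2 * (-1)^n * (n.factorial : ℂ) *
          ((((y:ℂ) + I) ^ (n+1))⁻¹ - (((y:ℂ) - I) ^ (n+1))⁻¹)).re := funext ih
    rw [hfun]
    exact ((hdD n x).real_of_complex).deriv

lemma key2 (f : ℝ → ℝ) (hf : ∀ x : ℝ, f x = 1 / (1 + x ^ 2)) (n : ℕ) (x : ℝ) :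
    ((iteratedDeriv n f x : ℝ) : ℂ) = I/2 * (-1)^n * (n.factorial : ℂ) *
      ((((x:ℂ) + I) ^ (n+1))⁻¹ - (((x:ℂ) - I) ^ (n+1))⁻¹) := by
  rw [key1 f hf n x]
  set w : ℂ := I/2 * (-1)^n * (n.factorial : ℂ) *
      ((((x:ℂ) + I) ^ (n+1))⁻¹ - (((x:ℂ) - I) ^ (n+1))⁻¹) with hw
  have c1 : (starRingEnd ℂ) ((((x:ℂ) + I) ^ (n+1))⁻¹) = (((x:ℂ) - I) ^ (n+1))⁻¹ := by
    rw [map_inv₀, map_pow, map_add, Complex.conj_ofReal, Complex.conj_I]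
    ring_nf
  have c2 : (starRingEnd ℂ) ((((x:ℂ) - I) ^ (n+1))⁻¹) = (((x:ℂ) + I) ^ (n+1))⁻¹ := by
    rw [map_inv₀, map_pow, map_sub, Complex.conj_ofReal, Complex.conj_I]
    ring_nf
  have hconj : (starRingEnd ℂ) w = w := by
    rw [hw, map_mul, map_mul, map_mul, map_sub, c1, c2, map_natCast, map_div₀,
      Complex.conj_I, map_ofNat, map_pow, map_neg, map_one]
    ring
  exact Complex.conj_eq_iff_re.mp hconj

lemma key3 (f : ℝ → ℝ) (hf : ∀ x : ℝ, f x = 1 / (1 + x ^ 2)) (n : ℕ) (x : ℝ) :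
    (iteratedDeriv n f x) ^ 2
      = ((n.factorial : ℝ))^2/2 * ((1 + x^2) ^ (n+1))⁻¹
        - ((n.factorial : ℝ))^2/2 * ((((x:ℂ) + I) ^ (2*n+2))⁻¹).re := by
  set A : ℂ := (((x:ℂ) + I) ^ (n+1))⁻¹ with hA
  set B : ℂ := (((x:ℂ) - I) ^ (n+1))⁻¹ with hB
  set u : ℂ := (((x:ℂ) + I) ^ (2*n+2))⁻¹ with hu
  have hA2 : A^2 = u := by
    rw [hA, hu, inv_pow, ← pow_mul, show (n+1)*2 = 2*n+2 from by ring]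
  have hB2 : B^2 = (starRingEnd ℂ) u := by
    rw [hB, hu]
    rw [map_inv₀, map_pow, map_add, Complex.conj_I, Complex.conj_ofReal, inv_pow, ← pow_mul,
      show (n+1)*2 = 2*n+2 from by ring, sub_eq_add_neg]
  have hAB : A * B = ((((1 + x^2 : ℝ))^(n+1) : ℝ) : ℂ)⁻¹ := by
    rw [hA, hB, ← mul_inv, ← mul_pow]
    congr 1
    have : ((x:ℂ) + I) * ((x:ℂ) - I) = ((1 + x^2 : ℝ) : ℂ) := by
      push_cast
      ring_nf
      rw [Complex.I_sq]
      ring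
    rw [this]
    push_cast
    ring
  have hsq : ((iteratedDeriv n f x ^ 2 : ℝ) : ℂ)
      = (((n.factorial : ℝ))^2/2 * ((1 + x^2) ^ (n+1))⁻¹ : ℝ)
        - ((((n.factorial : ℝ))^2/4 : ℝ) : ℂ) * (u + (starRingEnd ℂ) u) := by
    have h2 := key2 f hf n x
    have : ((iteratedDeriv n f x ^ 2 : ℝ) : ℂ) = ((iteratedDeriv n f x : ℝ) : ℂ)^2 := by
      push_cast; ring
    rw [this, h2]
    have hexp : (I/2 * (-1)^n * (n.factorial : ℂ) * (A - B))^2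
        = (I^2/4) * ((-1:ℂ)^n)^2 * ((n.factorial : ℂ))^2 * (A^2 + B^2 - 2*(A*B)) := by
      ring
    rw [hexp, Complex.I_sq]
    have hsgn : ((-1:ℂ)^n)^2 = 1 := by
      rw [← pow_mul]
      exact Even.neg_one_pow ⟨n, by ring⟩
    rw [hsgn, hA2, hB2, hAB]
    push_cast
    ring
  have hre := congrArg Complex.re hsq
  simp only [Complex.ofReal_re, Complex.sub_re, Complex.add_re, Complex.conj_re,
    Complex.re_ofReal_mul] at hre
  rw [hre]
  ring

lemma intOn (m : ℕ) : IntegrableOn (fun x : ℝ => ((1+x^2)^(m+1))⁻¹) (Set.Ioi 0) := by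
  apply Integrable.mono' (g := fun x : ℝ => (1+x^2)⁻¹) integrable_inv_one_add_sq.integrableOn
  · exact (Continuous.inv₀ (by continuity) (fun x => by positivity)).aestronglyMeasurable
  · refine Filter.Eventually.of_forall fun x => ?_
    rw [Real.norm_eq_abs, abs_of_pos (by positivity)]
    exact inv_anti₀ (aux_pos x) (le_self_pow₀ (by nlinarith [sq_nonneg x]) (by omega))

lemma hdR (k : ℕ) (x : ℝ) :
    HasDerivAt (fun x : ℝ => x * ((1+x^2)^(k+1))⁻¹)
      (-(2*(k:ℝ)+1) * ((1+x^2)^(k+1))⁻¹ + (2*(k:ℝ)+2) * ((1+x^2)^(k+2))⁻¹) x := by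
  have h1 : HasDerivAt (fun x : ℝ => (1+x^2)^(k+1))
      (((k:ℝ)+1) * (1+x^2)^k * (2*x)) x := by
    have h0 : HasDerivAt (fun x : ℝ => 1+x^2) (2*x) x := by
      simpa using ((hasDerivAt_pow 2 x).const_add 1)
    simpa using h0.fun_pow (k+1)
  have h2 := h1.inv (ne_of_gt (pow_pos (aux_pos x) _))
  have h3 := (hasDerivAt_id x).mul h2
  refine h3.congr_deriv ?_
  simp only [Pi.inv_apply, id_eq]
  have hne : (1+x^2) ≠ 0 := (aux_pos x).ne'
  field_simp
  ring

lemma tendF (k : ℕ) :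
    Tendsto (fun x : ℝ => x * ((1+x^2)^(k+1))⁻¹) atTop (nhds 0) := by
  apply squeeze_zero' ?_ ?_ tendsto_inv_atTop_zero
  · filter_upwards [eventually_ge_atTop (0:ℝ)] with x hx
    positivity
  · filter_upwards [eventually_ge_atTop (1:ℝ)] with x hx
    have hx0 : (0:ℝ) < x := by linarith
    have h : x^2 ≤ (1+x^2)^(k+1) := by
      calc x^2 ≤ 1+x^2 := by linarith
      _ ≤ (1+x^2)^(k+1) := le_self_pow₀ (by nlinarith [sq_nonneg x]) (by omega)
    calc x * ((1+x^2)^(k+1))⁻¹ ≤ x * (x^2)⁻¹ :=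
          mul_le_mul_of_nonneg_left (inv_anti₀ (by positivity) h) hx0.le
      _ = x⁻¹ := by rw [pow_two, mul_inv, ← mul_assoc, mul_inv_cancel₀ hx0.ne', one_mul]

lemma wallis_rec (k : ℕ) :
    (2*(k:ℝ)+2) * ∫ x in Set.Ioi (0:ℝ), ((1+x^2)^(k+2))⁻¹
      = (2*(k:ℝ)+1) * ∫ x in Set.Ioi (0:ℝ), ((1+x^2)^(k+1))⁻¹ := by
  have hint1 := intOn k
  have hint2 := intOn (k+1)
  have key := integral_Ioi_of_hasDerivAt_of_tendsto' (a := 0)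
    (fun x _ => hdR k x)
    (((hint1.const_mul (-(2*(k:ℝ)+1))).add (hint2.const_mul (2*(k:ℝ)+2))))
    (tendF k)
  simp only [zero_mul] at key
  rw [integral_add (hint1.const_mul _) (hint2.const_mul _),
    integral_const_mul, integral_const_mul] at key
  norm_num at key
  linarith

lemma wallis (n : ℕ) :
    ∫ x in Set.Ioi (0:ℝ), ((1+x^2)^(n+1))⁻¹
      = ((2*n).factorial : ℝ) * π / (2^(2*n+1) * ((n.factorial : ℝ))^2) := by
  induction n with
  | zero =>
    norm_num
  | succ k ih =>
    have hrec := wallis_rec k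
    rw [ih] at hrec
    have h2 : (2*(k:ℝ)+2) ≠ 0 := by positivity
    apply mul_left_cancel₀ h2
    rw [hrec]
    rw [show 2*(k+1) = (2*k+1)+1 from by ring, Nat.factorial_succ,
      show 2*k+1 = (2*k)+1 from rfl, Nat.factorial_succ, Nat.factorial_succ]
    have hfk : ((k.factorial : ℝ)) ≠ 0 := Nat.cast_ne_zero.mpr k.factorial_ne_zero
    push_cast
    field_simp
    ring

lemma normsq (x : ℝ) : ‖(x:ℂ) + I‖^2 = 1 + x^2 := by
  rw [Complex.sq_norm, Complex.normSq_apply]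
  simp
  ring

lemma intOnC (n : ℕ) : IntegrableOn (fun x : ℝ => (((x:ℂ) + I) ^ (2*n+2))⁻¹) (Set.Ioi 0) := by
  apply Integrable.mono' (g := fun x : ℝ => (1+x^2)⁻¹) integrable_inv_one_add_sq.integrableOn
  · exact (Continuous.inv₀ (by continuity)
      (fun x => pow_ne_zero _ (aux_ne1 x))).aestronglyMeasurable
  · refine Filter.Eventually.of_forall fun x => ?_
    rw [norm_inv, norm_pow]
    have h1 : ‖(x:ℂ) + I‖^(2*n+2) = (1+x^2)^(n+1) := by
      rw [show 2*n+2 = 2*(n+1) from by ring, pow_mul, normsq]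
    rw [h1]
    exact inv_anti₀ (aux_pos x) (le_self_pow₀ (by nlinarith [sq_nonneg x]) (by omega))

lemma hdC (n : ℕ) (x : ℝ) :
    HasDerivAt (fun x : ℝ => -(((2*n+1 : ℕ) : ℂ))⁻¹ * (((x:ℂ) + I) ^ (2*n+1))⁻¹)
      ((((x:ℂ) + I) ^ (2*n+2))⁻¹) x := by
  have h := ((hdA (2*n) x).comp_ofReal).const_mul (-(((2*n+1 : ℕ) : ℂ))⁻¹)
  refine h.congr_deriv ?_
  have hne : ((2*n+1 : ℕ) : ℂ) ≠ 0 := Nat.cast_ne_zero.mpr (by omega)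
  push_cast at hne ⊢
  field_simp

lemma tendC (n : ℕ) :
    Tendsto (fun x : ℝ => -(((2*n+1 : ℕ) : ℂ))⁻¹ * (((x:ℂ) + I) ^ (2*n+1))⁻¹)
      atTop (nhds 0) := by
  rw [tendsto_zero_iff_norm_tendsto_zero]
  apply squeeze_zero' (Filter.Eventually.of_forall fun x => norm_nonneg _) ?_
    tendsto_inv_atTop_zero
  filter_upwards [eventually_ge_atTop (1:ℝ)] with x hx
  have hx0 : (0:ℝ) < x := by linarith
  rw [norm_mul, norm_neg, norm_inv, norm_inv, norm_pow, Complex.norm_natCast]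
  have hre : x ≤ ‖(x:ℂ) + I‖ := by
    have := Complex.abs_re_le_norm ((x:ℂ) + I)
    simp at this
    calc x = |x| := (abs_of_pos hx0).symm
    _ ≤ _ := by simpa using this
  have h1 : x ≤ ‖(x:ℂ) + I‖^(2*n+1) := by
    calc x ≤ x^(2*n+1) := le_self_pow₀ hx (by omega)
    _ ≤ _ := pow_le_pow_left₀ hx0.le hre _
  have h2 : (‖(x:ℂ) + I‖^(2*n+1))⁻¹ ≤ x⁻¹ := inv_anti₀ hx0 h1
  have h3 : ((2*n+1 : ℕ) : ℝ)⁻¹ ≤ 1 := by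
    rw [inv_le_one_iff₀]
    right
    exact_mod_cast by omega
  calc ((2*n+1 : ℕ) : ℝ)⁻¹ * (‖(x:ℂ) + I‖^(2*n+1))⁻¹ ≤ 1 * x⁻¹ :=
        mul_le_mul h3 h2 (by positivity) zero_le_one
  _ = x⁻¹ := one_mul _

lemma intCre (n : ℕ) :
    (∫ x in Set.Ioi (0:ℝ), (((x:ℂ) + I) ^ (2*n+2))⁻¹).re = 0 := by
  have key := integral_Ioi_of_hasDerivAt_of_tendsto' (a := 0)
    (fun x _ => hdC n x) (intOnC n) (tendC n)
  rw [key]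
  have hI : (I:ℂ)^(2*n+1) = (-1)^n * I := by
    rw [pow_succ, pow_mul, Complex.I_sq]
  have h0 : ((0:ℝ):ℂ) + I = I := by simp
  rw [h0, hI]
  have h2 : ((-1:ℂ)^n * I)⁻¹ = (-1)^n * (-I) := by
    rw [mul_inv, ← inv_pow, inv_neg, inv_one, Complex.inv_I]
  rw [h2]
  have h3 : (0:ℂ) - -(((2*n+1 : ℕ) : ℂ))⁻¹ * ((-1)^n * (-I))
      = ((((2*n+1 : ℕ) : ℝ))⁻¹ * (-1)^n : ℝ) * (-I) := by
    push_cast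
    ring
  rw [h3, Complex.re_ofReal_mul]
  simp


theorem stmt_13 (f : ℝ → ℝ) (hf : ∀ x : ℝ, f x = 1 / (1 + x ^ 2)) (n : ℕ) :
    ∫ x in Set.Ioi (0 : ℝ), (iteratedDeriv n f x) ^ 2
      = ((2 * n).factorial : ℝ) * Real.pi / 2 ^ (2 * n + 2) := by
  have h1 : IntegrableOn
      (fun x : ℝ => ((n.factorial : ℝ))^2/2 * ((1+x^2)^(n+1))⁻¹) (Set.Ioi 0) :=
    (intOn n).const_mul _
  have h2 : IntegrableOn
      (fun x : ℝ => ((((x:ℂ)+I)^(2*n+2))⁻¹).re) (Set.Ioi 0) := (intOnC n).re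
  have h2c : IntegrableOn
      (fun x : ℝ => ((n.factorial : ℝ))^2/2 * ((((x:ℂ)+I)^(2*n+2))⁻¹).re) (Set.Ioi 0) :=
    h2.const_mul _
  simp only [key3 f hf n]
  rw [integral_sub h1 h2c, integral_const_mul, integral_const_mul, wallis n]
  have hz : ∫ x in Set.Ioi (0:ℝ), ((((x:ℂ)+I)^(2*n+2))⁻¹).re = 0 := by
    have h : (∫ x in Set.Ioi (0:ℝ), ((((x:ℂ)+I)^(2*n+2))⁻¹).re)
        = (∫ x in Set.Ioi (0:ℝ), (((x:ℂ)+I)^(2*n+2))⁻¹).re := integral_re (intOnC n)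
    rw [h, intCre n]
  rw [hz, mul_zero, sub_zero]
  have hf0 : ((n.factorial : ℝ)) ≠ 0 := Nat.cast_ne_zero.mpr n.factorial_ne_zero
  field_simp
  ring
end

section
/- Let m and n be natural numbers with m > n and m + n odd. Then I_{m,n} = ((-1)^m / 4) · Σ_{j=1}^{m-n} ( sin((m+n)π/2) − (-1)^j · sin((m−n)π/2) ) · (m−j)! · (n+j−1)!. -/
open Complex Real MeasureTheory Filter

noncomputable def g (k : ℕ) (x : ℝ) : ℂ :=
  (-1)^k * (Nat.factorial k : ℂ) / (2 * Complex.I) *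
    (((x:ℂ) - Complex.I)^(-(k+1):ℤ) - ((x:ℂ) + Complex.I)^(-(k+1):ℤ))

lemma sub_I_ne (x : ℝ) : ((x:ℂ) - Complex.I) ≠ 0 := by
  intro h; have := congrArg Complex.im h; simp at this

lemma add_I_ne (x : ℝ) : ((x:ℂ) + Complex.I) ≠ 0 := by
  intro h; have := congrArg Complex.im h; simp at this

lemma hasDerivAt_g (k : ℕ) (x : ℝ) : HasDerivAt (g k) (g (k+1) x) x := by
  have hA : HasDerivAt (fun y : ℝ => ((y:ℂ) - Complex.I)^(-(k+1):ℤ))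
      ((-(k+1):ℤ) * ((x:ℂ) - Complex.I)^(-(k+2):ℤ)) x := by
    have h1 : HasDerivAt (fun z : ℂ => (z - Complex.I)^(-(k+1):ℤ))
        ((-(k+1):ℤ) * ((x:ℂ) - Complex.I)^(-(k+1)-1:ℤ)) (x:ℂ) := by
      have := (hasDerivAt_zpow (-(k+1):ℤ) ((x:ℂ) - Complex.I) (Or.inl (sub_I_ne x)))
      have h2 := this.comp (x:ℂ) ((hasDerivAt_id (x:ℂ)).sub_const Complex.I)
      simp only [mul_one] at h2
      exact h2
    have : (-(k+1)-1 : ℤ) = (-(k+2):ℤ) := by ring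
    rw [this] at h1
    exact h1.comp_ofReal
  have hB : HasDerivAt (fun y : ℝ => ((y:ℂ) + Complex.I)^(-(k+1):ℤ))
      ((-(k+1):ℤ) * ((x:ℂ) + Complex.I)^(-(k+2):ℤ)) x := by
    have h1 : HasDerivAt (fun z : ℂ => (z + Complex.I)^(-(k+1):ℤ))
        ((-(k+1):ℤ) * ((x:ℂ) + Complex.I)^(-(k+1)-1:ℤ)) (x:ℂ) := by
      have := (hasDerivAt_zpow (-(k+1):ℤ) ((x:ℂ) + Complex.I) (Or.inl (add_I_ne x)))
      have h2 := this.comp (x:ℂ) ((hasDerivAt_id (x:ℂ)).add_const Complex.I)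
      simp only [mul_one] at h2
      exact h2
    have : (-(k+1)-1 : ℤ) = (-(k+2):ℤ) := by ring
    rw [this] at h1
    exact h1.comp_ofReal
  have h := ((hA.sub hB).const_mul ((-1)^k * (Nat.factorial k : ℂ) / (2 * Complex.I)))
  have h' : HasDerivAt (g k) ((-1)^k * (Nat.factorial k : ℂ) / (2 * Complex.I) *
      ((-(k+1):ℤ) * ((x:ℂ) - Complex.I)^(-(k+2):ℤ) - (-(k+1):ℤ) * ((x:ℂ) + Complex.I)^(-(k+2):ℤ))) x := h
  convert h' using 1
  show g (k+1) x = _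
  unfold g
  rw [Nat.factorial_succ]
  simp only [Nat.cast_add, Nat.cast_one, Nat.cast_mul]
  have e1 : (-(((k:ℤ))+1+1)) = -((k:ℤ)+2) := by ring
  rw [e1]
  push_cast
  ring

lemma g_zero_eq (x : ℝ) : g 0 x = (((1 + x^2)⁻¹ : ℝ) : ℂ) := by
  unfold g
  have h1 := sub_I_ne x; have h2 := add_I_ne x
  have hx : ((1:ℝ) + x^2) ≠ 0 := by positivity
  have hI : (Complex.I : ℂ) ≠ 0 := Complex.I_ne_zero
  norm_num
  field_simp
  ring_nf
  simp [Complex.I_sq]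
  have hxc : ((1:ℂ) + (x:ℂ)^2) ≠ 0 := by
    intro h; apply hx; exact_mod_cast h
  field_simp

lemma norm_x_add_I (x : ℝ) : ‖(x:ℂ) + Complex.I‖ = Real.sqrt (1 + x^2) := by
  rw [Complex.norm_def, Complex.normSq_apply]
  simp
  ring_nf

lemma norm_x_sub_I (x : ℝ) : ‖(x:ℂ) - Complex.I‖ = Real.sqrt (1 + x^2) := by
  rw [Complex.norm_def, Complex.normSq_apply]
  simp
  ring_nf

lemma sqrt_ge_one (x : ℝ) : (1:ℝ) ≤ Real.sqrt (1 + x^2) := by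
  nlinarith [Real.sq_sqrt (show (0:ℝ) ≤ 1+x^2 by positivity), Real.sqrt_nonneg (1+x^2)]

lemma norm_g_le (k : ℕ) (x : ℝ) : ‖g k x‖ ≤ (Nat.factorial k : ℝ) / Real.sqrt (1 + x^2) := by
  have hs : (1:ℝ) ≤ Real.sqrt (1 + x^2) := sqrt_ge_one x
  have hs0 : (0:ℝ) < Real.sqrt (1 + x^2) := by linarith
  have key : ∀ z : ℂ, ‖z‖ = Real.sqrt (1 + x^2) →
      ‖z ^ (-(k+1):ℤ)‖ ≤ (Real.sqrt (1 + x^2))⁻¹ := by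
    intro z hz
    rw [norm_zpow, hz]
    rw [show (-(k+1):ℤ) = -((k+1):ℕ) by push_cast; ring, zpow_neg, zpow_natCast]
    rw [inv_le_inv₀ (by positivity) hs0]
    calc Real.sqrt (1+x^2) = (Real.sqrt (1+x^2))^1 := (pow_one _).symm
    _ ≤ (Real.sqrt (1+x^2))^(k+1) := pow_le_pow_right₀ hs (by omega)
  unfold g
  rw [norm_mul, norm_div, norm_mul, norm_mul, norm_pow]
  simp only [norm_neg, norm_one, one_pow, one_mul, Complex.norm_I, mul_one,
    Complex.norm_natCast, Complex.norm_ofNat]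
  have h1 := key _ (norm_x_sub_I x)
  have h2 := key _ (norm_x_add_I x)
  calc (Nat.factorial k : ℝ) / 2 * ‖((x:ℂ) - Complex.I)^(-(k+1):ℤ) - ((x:ℂ) + Complex.I)^(-(k+1):ℤ)‖
      ≤ (Nat.factorial k : ℝ) / 2 * (‖((x:ℂ) - Complex.I)^(-(k+1):ℤ)‖ + ‖((x:ℂ) + Complex.I)^(-(k+1):ℤ)‖) := by
        gcongr
        exact norm_sub_le _ _
    _ ≤ (Nat.factorial k : ℝ) / 2 * ((Real.sqrt (1+x^2))⁻¹ + (Real.sqrt (1+x^2))⁻¹) := by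
        gcongr
    _ = (Nat.factorial k : ℝ) / Real.sqrt (1 + x^2) := by
        field_simp; ring

lemma I_pow_eq (s : ℕ) : (Complex.I)^s =
    ((Real.cos (s * Real.pi / 2) : ℝ) : ℂ) + ((Real.sin (s * Real.pi / 2) : ℝ) : ℂ) * Complex.I := by
  induction s with
  | zero => simp
  | succ s ih =>
    have hc : ((s+1 : ℕ) : ℝ) * Real.pi / 2 = s * Real.pi / 2 + Real.pi / 2 := by
      push_cast; ring
    rw [pow_succ, ih, hc, Real.cos_add_pi_div_two, Real.sin_add_pi_div_two]
    apply Complex.ext <;> simp <;> ring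

lemma g_at_zero (k : ℕ) : (g k 0).re =
    (-1 : ℝ)^k * (Nat.factorial k : ℝ) * Real.sin ((k+1) * Real.pi / 2) := by
  have hinv : (Complex.I)⁻¹ = -Complex.I := Complex.inv_I
  have hinv2 : (-Complex.I)⁻¹ = Complex.I := by
    rw [inv_eq_iff_eq_inv, hinv]
  have e1 : ((0:ℝ):ℂ) - Complex.I = -Complex.I := by simp
  have e2 : ((0:ℝ):ℂ) + Complex.I = Complex.I := by simp
  have z1 : (-Complex.I)^(-(k+1):ℤ) = Complex.I^(k+1) := by
    rw [show (-(k+1):ℤ) = -((k+1):ℕ) by push_cast; ring, zpow_neg, zpow_natCast, ← inv_pow, hinv2]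
  have z2 : (Complex.I)^(-(k+1):ℤ) = (-Complex.I)^(k+1) := by
    rw [show (-(k+1):ℤ) = -((k+1):ℕ) by push_cast; ring, zpow_neg, zpow_natCast, ← inv_pow, hinv]
  have hneg : (-Complex.I)^(k+1) = (-1:ℂ)^(k+1) * Complex.I^(k+1) := by
    rw [neg_pow]
  unfold g
  rw [e1, e2, z1, z2, hneg, I_pow_eq]
  rcases Nat.even_or_odd k with hk | hk
  · have h1 : (-1:ℂ)^k = 1 := Even.neg_one_pow hk
    have h1' : (-1:ℝ)^k = 1 := Even.neg_one_pow hk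
    have h2 : (-1:ℂ)^(k+1) = -1 := by
      rw [pow_succ, h1]; ring
    rw [h1, h1', h2]
    simp only [Nat.cast_add, Nat.cast_one]
    have key : (1:ℂ) * (Nat.factorial k : ℂ) / (2 * Complex.I) *
        ((((Real.cos ((k+1) * Real.pi / 2) : ℝ) : ℂ) + ((Real.sin ((k+1) * Real.pi / 2) : ℝ) : ℂ) * Complex.I) -
          (-1) * ((((Real.cos ((k+1) * Real.pi / 2) : ℝ) : ℂ) + ((Real.sin ((k+1) * Real.pi / 2) : ℝ) : ℂ) * Complex.I)))
        = (((Nat.factorial k : ℝ) * Real.sin ((k+1) * Real.pi / 2) : ℝ) : ℂ)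
          - (((Nat.factorial k : ℝ) * Real.cos ((k+1) * Real.pi / 2) : ℝ) : ℂ) * Complex.I := by
      field_simp
      ring_nf
      simp [Complex.I_sq]
      try push_cast
      try ring
    rw [key]
    simp [-Complex.ofReal_sin, -Complex.ofReal_cos]
  · have h2 : (-1:ℂ)^(k+1) = 1 := by
      rw [pow_succ, Odd.neg_one_pow hk]; ring
    obtain ⟨t, ht⟩ := hk
    have hs : Real.sin (((k:ℝ)+1) * Real.pi / 2) = 0 := by
      have : ((k:ℝ)+1) * Real.pi / 2 = ((t+1 : ℕ) : ℝ) * Real.pi := by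
        push_cast [ht]; ring
      rw [this, Real.sin_nat_mul_pi]
    rw [h2]
    simp only [Nat.cast_add, Nat.cast_one]
    rw [hs]
    simp

noncomputable def gr (k : ℕ) (x : ℝ) : ℝ := (g k x).re

lemma g_at_zero' (k : ℕ) : gr k 0 = (-1 : ℝ)^k * (Nat.factorial k : ℝ) * Real.sin ((k+1) * Real.pi / 2) := by
  exact g_at_zero k

lemma hasDerivAt_gr (k : ℕ) (x : ℝ) : HasDerivAt (gr k) (gr (k+1) x) x :=
  (Complex.reCLM.hasFDerivAt (x := g k x)).comp_hasDerivAt x (hasDerivAt_g k x)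

lemma continuous_gr (k : ℕ) : Continuous (gr k) := by
  rw [continuous_iff_continuousAt]
  exact fun x => (hasDerivAt_gr k x).continuousAt

lemma iteratedDeriv_eq (f : ℝ → ℝ) (hf : ∀ x : ℝ, f x = 1 / (1 + x ^ 2)) (k : ℕ) :
    iteratedDeriv k f = gr k := by
  induction k with
  | zero =>
    funext x
    rw [iteratedDeriv_zero, hf]
    unfold gr
    rw [g_zero_eq, Complex.ofReal_re, one_div]
  | succ k ih =>
    funext x
    rw [iteratedDeriv_succ, ih]
    exact (hasDerivAt_gr k x).deriv

lemma abs_gr_le (k : ℕ) (x : ℝ) : |gr k x| ≤ (Nat.factorial k : ℝ) / Real.sqrt (1 + x^2) :=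
  le_trans (Complex.abs_re_le_norm _) (norm_g_le k x)

lemma prod_bound (a b : ℕ) (x : ℝ) :
    |gr a x * gr b x| ≤ (Nat.factorial a : ℝ) * (Nat.factorial b : ℝ) * (1 + x^2)⁻¹ := by
  have h0 : (0:ℝ) < Real.sqrt (1+x^2) := lt_of_lt_of_le one_pos (sqrt_ge_one x)
  rw [abs_mul]
  calc |gr a x| * |gr b x|
      ≤ ((Nat.factorial a : ℝ) / Real.sqrt (1 + x^2)) * ((Nat.factorial b : ℝ) / Real.sqrt (1 + x^2)) := by
        exact mul_le_mul (abs_gr_le a x) (abs_gr_le b x) (abs_nonneg _) (by positivity)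
    _ = (Nat.factorial a : ℝ) * (Nat.factorial b : ℝ) * (Real.sqrt (1+x^2) * Real.sqrt (1+x^2))⁻¹ := by
        field_simp
    _ = (Nat.factorial a : ℝ) * (Nat.factorial b : ℝ) * (1 + x^2)⁻¹ := by
        rw [Real.mul_self_sqrt (by positivity)]

lemma integrable_prod (a b : ℕ) : IntegrableOn (fun x => gr a x * gr b x) (Set.Ioi (0:ℝ)) := by
  apply Integrable.mono' ((integrable_inv_one_add_sq.const_mul
    ((Nat.factorial a : ℝ) * (Nat.factorial b : ℝ))).integrableOn)
  · exact (((continuous_gr a).mul (continuous_gr b)).aestronglyMeasurable).restrict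
  · filter_upwards with x
    rw [Real.norm_eq_abs]
    exact prod_bound a b x

lemma tendsto_prod_zero (a b : ℕ) :
    Tendsto (fun x => gr a x * gr b x) atTop (nhds 0) := by
  apply squeeze_zero_norm (fun x => prod_bound a b x)
  have h1 : Tendsto (fun x : ℝ => 1 + x^2) atTop atTop :=
    tendsto_atTop_add_const_left _ 1 (tendsto_pow_atTop (two_ne_zero))
  have h2 : Tendsto (fun x : ℝ => (1 + x^2)⁻¹) atTop (nhds 0) :=
    tendsto_inv_atTop_zero.comp h1
  simpa using h2.const_mul ((Nat.factorial a : ℝ) * (Nat.factorial b : ℝ))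

lemma parts (a b : ℕ) :
    (∫ x in Set.Ioi (0:ℝ), gr (a+1) x * gr b x)
      = -(gr a 0 * gr b 0) - ∫ x in Set.Ioi (0:ℝ), gr a x * gr (b+1) x := by
  have hu : ∀ x ∈ Set.Ioi (0:ℝ), HasDerivAt (gr a) (gr (a+1) x) x := fun x _ => hasDerivAt_gr a x
  have hv : ∀ x ∈ Set.Ioi (0:ℝ), HasDerivAt (gr b) (gr (b+1) x) x := fun x _ => hasDerivAt_gr b x
  have hint : IntegrableOn (fun x => gr (a+1) x * gr b x + gr a x * gr (b+1) x) (Set.Ioi (0:ℝ)) :=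
    (integrable_prod (a+1) b).add (integrable_prod a (b+1))
  have h_zero : Tendsto (gr a * gr b) (nhdsWithin 0 (Set.Ioi 0)) (nhds (gr a 0 * gr b 0)) :=
    (((continuous_gr a).mul (continuous_gr b)).tendsto 0).mono_left nhdsWithin_le_nhds
  have h_infty : Tendsto (gr a * gr b) atTop (nhds 0) := tendsto_prod_zero a b
  have H := integral_Ioi_deriv_mul_eq_sub hu hv (by exact hint) h_zero h_infty
  rw [MeasureTheory.integral_add (integrable_prod (a+1) b) (integrable_prod a (b+1))] at H
  linarith

lemma neg_one_pow_congr' (a b : ℕ) (h : a % 2 = b % 2) : (-1:ℝ)^a = (-1:ℝ)^b := by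
  rcases Nat.even_or_odd a with ha | ha <;> rcases Nat.even_or_odd b with hb | hb <;>
    simp [ha.neg_one_pow, hb.neg_one_pow, Even.neg_one_pow, Odd.neg_one_pow] <;>
    · exfalso
      rcases ha with ⟨u, hu⟩ <;> rcases hb with ⟨v, hv⟩ <;> omega

lemma term_eq (m n j : ℕ) (hmn : n < m) (hodd : Odd (m+n)) (hj1 : 1 ≤ j) (hj2 : j ≤ m - n) :
    (-1:ℝ)^j * (gr (m-j) 0 * gr (n+j-1) 0) / 2
      = ((-1:ℝ)^m / 4) * ((Real.sin (((m:ℝ) + (n:ℝ)) * π / 2)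
            - (-1:ℝ)^j * Real.sin (((m:ℝ) - (n:ℝ)) * π / 2))
          * ((m-j).factorial : ℝ) * ((n+j-1).factorial : ℝ)) := by
  have hjm : j ≤ m := by omega
  have c1 : ((m - j : ℕ) : ℝ) = (m:ℝ) - (j:ℝ) := by
    push_cast [Nat.cast_sub hjm]; ring
  have c2 : ((n + j - 1 : ℕ) : ℝ) = (n:ℝ) + (j:ℝ) - 1 := by
    push_cast [Nat.cast_sub (show 1 ≤ n + j by omega)]; ring
  rw [g_at_zero', g_at_zero', c1, c2]
  set A : ℝ := ((m:ℝ) - (j:ℝ) + 1) * π / 2 with hA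
  have c3 : ((n:ℝ) + (j:ℝ) - 1 + 1) * π / 2 = ((n:ℝ) + (j:ℝ)) * π / 2 := by ring
  rw [c3]
  set B : ℝ := ((n:ℝ) + (j:ℝ)) * π / 2 with hB
  have s1 : (-1:ℝ)^(m-j) = (-1:ℝ)^m * (-1:ℝ)^j := by
    rw [neg_one_pow_congr' (m-j) (m+j) (by omega), pow_add]
  have s2 : (-1:ℝ)^(n+j-1) = -((-1:ℝ)^n * (-1:ℝ)^j) := by
    rw [neg_one_pow_congr' (n+j-1) (n+j+1) (by omega), pow_add, pow_add]
    ring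
  have smn : (-1:ℝ)^m * (-1:ℝ)^n = -1 := by
    rw [← pow_add]
    exact Odd.neg_one_pow hodd
  have key1 : Real.sin A * Real.sin B = (Real.cos (A-B) - Real.cos (A+B))/2 := by
    rw [Real.cos_sub, Real.cos_add]; ring
  have key2 : Real.cos (A+B) = -Real.sin (((m:ℝ)+(n:ℝ)) * π / 2) := by
    have : A + B = ((m:ℝ)+(n:ℝ)) * π / 2 + π/2 := by rw [hA, hB]; ring
    rw [this, Real.cos_add_pi_div_two]
  have key3 : Real.cos (A-B) = -((-1:ℝ)^j * Real.sin (((m:ℝ)-(n:ℝ)) * π / 2)) := by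
    have : A - B = (((m:ℝ)-(n:ℝ)) * π / 2 + π/2) - (j:ℕ) * π := by rw [hA, hB]; ring
    rw [this, Real.cos_sub_nat_mul_pi, Real.cos_add_pi_div_two]
    ring
  have hTj : Real.sin A * Real.sin B
      = (Real.sin (((m:ℝ)+(n:ℝ)) * π / 2) - (-1:ℝ)^j * Real.sin (((m:ℝ)-(n:ℝ)) * π / 2)) / 2 := by
    rw [key1, key2, key3]; ring
  rw [s1, s2]
  obtain ⟨t, ht⟩ := hodd
  rcases eq_or_ne (j % 2) (m % 2) with hp | hp
  · rcases Nat.even_or_odd j with hj | hj <;> rcases Nat.even_or_odd m with hm' | hm' <;>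
      rcases Nat.even_or_odd n with hn' | hn' <;>
    first
      | (exfalso
         rcases hj with ⟨u, hu⟩
         rcases hm' with ⟨v, hv⟩
         rcases hn' with ⟨w, hw⟩
         omega)
      | (simp only [hj.neg_one_pow, hm'.neg_one_pow, hn'.neg_one_pow] at hTj ⊢
         first
           | linear_combination ((((m-j).factorial : ℝ) * ((n+j-1).factorial : ℝ)) / 2) * hTj
           | linear_combination (-((((m-j).factorial : ℝ) * ((n+j-1).factorial : ℝ)) / 2)) * hTj)
  · have hjn : j % 2 = n % 2 := by omega
    have hpw : (-1:ℝ)^j = (-1:ℝ)^n := neg_one_pow_congr' j n hjn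
    have hzero : Real.sin (((m:ℝ)+(n:ℝ)) * π / 2)
        - (-1:ℝ)^j * Real.sin (((m:ℝ)-(n:ℝ)) * π / 2) = 0 := by
      have hx : ((m:ℝ)+(n:ℝ)) * π / 2 = ((m:ℝ)-(n:ℝ)) * π / 2 + (n:ℕ) * π := by
        push_cast; ring
      rw [hx, Real.sin_add_nat_mul_pi, hpw]
      ring
    have hTj0 : Real.sin A * Real.sin B = 0 := by rw [hTj, hzero]; ring
    rcases mul_eq_zero.mp hTj0 with h | h <;> rw [h, hzero] <;> ring

theorem stmt_15 (f : ℝ → ℝ) (hf : ∀ x : ℝ, f x = 1 / (1 + x ^ 2))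
    (I : ℕ → ℕ → ℝ)
    (hI : ∀ m n : ℕ, I m n = ∫ x in Set.Ioi (0 : ℝ), iteratedDeriv m f x * iteratedDeriv n f x)
    (m n : ℕ) (hmn : n < m) (hodd : Odd (m + n)) :
    I m n = ((-1 : ℝ) ^ m / 4) *
      ∑ j ∈ Finset.Icc 1 (m - n),
        (Real.sin ((m + n) * Real.pi / 2) - (-1 : ℝ) ^ j * Real.sin ((m - n : ℝ) * Real.pi / 2))
          * ((m - j).factorial : ℝ) * ((n + j - 1).factorial : ℝ) := by
  have hI' : ∀ a b : ℕ, I a b = ∫ x in Set.Ioi (0 : ℝ), gr a x * gr b x := by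
    intro a b
    rw [hI, iteratedDeriv_eq f hf, iteratedDeriv_eq f hf]
  have main : ∀ k, k ≤ m - n → I m n =
      (∑ j ∈ Finset.Icc 1 k, (-1:ℝ)^j * (gr (m-j) 0 * gr (n+j-1) 0))
        + (-1:ℝ)^k * I (m-k) (n+k) := by
    intro k
    induction k with
    | zero => intro _; simp
    | succ k ih =>
      intro hk
      have hk' : k ≤ m - n := by omega
      rw [ih hk']
      have hm : m - k = (m - (k+1)) + 1 := by omega
      have hparts : I (m-k) (n+k) = -(gr (m-(k+1)) 0 * gr (n+k) 0) - I (m-(k+1)) (n+k+1) := by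
        rw [hI', hI', hm]
        exact parts (m-(k+1)) (n+k)
      rw [hparts, Finset.sum_Icc_succ_top (by omega : 1 ≤ k + 1)]
      have e1 : n + (k+1) - 1 = n + k := by omega
      have e2 : n + (k+1) = n + k + 1 := by omega
      rw [e1, e2]
      ring
  have hM := main (m-n) le_rfl
  have em : m - (m-n) = n := by omega
  have en : n + (m-n) = m := by omega
  obtain ⟨t, ht⟩ := hodd
  have hoddmn : (-1:ℝ)^(m-n) = -1 := Odd.neg_one_pow ⟨t-n, by omega⟩
  rw [em, en, hoddmn] at hM
  have hsym : I n m = I m n := by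
    rw [hI', hI']
    congr 1
    ext x
    exact mul_comm _ _
  rw [hsym] at hM
  have hImn : I m n =
      (∑ j ∈ Finset.Icc 1 (m-n), (-1:ℝ)^j * (gr (m-j) 0 * gr (n+j-1) 0)) / 2 := by
    linarith
  rw [hImn, Finset.sum_div, Finset.mul_sum]
  refine Finset.sum_congr rfl fun j hj => ?_
  rw [Finset.mem_Icc] at hj
  have := term_eq m n j hmn ⟨t, ht⟩ hj.1 hj.2
  rw [this]
end

section
/- For every natural number k, I_{2k+1, 2k} = ∫_0^∞ f_{2k+1}(x) f_{2k}(x) dx = -(1/2) · ((2k)!)^2. -/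
open Complex MeasureTheory Filter Set

noncomputable def EE (n : ℕ) (z : ℂ) : ℂ :=
  (-1)^n * n.factorial * Complex.I * (z + Complex.I)^(-(n+1) : ℤ)

lemma ne_zero_aux (x : ℝ) : (x : ℂ) + Complex.I ≠ 0 := by
  intro h
  have := congrArg Complex.im h
  simp at this

lemma EE_hasDerivAt (n : ℕ) (x : ℝ) :
    HasDerivAt (EE n) (EE (n+1) (x:ℂ)) (x : ℂ) := by
  have hz : (x:ℂ) + Complex.I ≠ 0 := ne_zero_aux x
  have h1 : HasDerivAt (fun z : ℂ => (z + Complex.I) ^ (-(n+1) : ℤ))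
      (((-(n+1):ℤ)) * ((x:ℂ) + Complex.I) ^ ((-(n+1) : ℤ)-1)) (x:ℂ) := by
    simpa [Function.comp_def] using (hasDerivAt_zpow (-(n+1):ℤ) ((x:ℂ)+Complex.I) (Or.inl hz)).comp (x:ℂ)
      ((hasDerivAt_id (x:ℂ)).add_const Complex.I)
  have := h1.const_mul ((-1)^n * (n.factorial : ℂ) * Complex.I)
  convert this using 1
  · rfl
  · rfl
  · rfl
  unfold EE
  have h2 : ((-(n+1) : ℤ)-1) = (-(n+2) : ℤ) := by ring
  rw [h2]
  push_cast [pow_succ, Nat.factorial_succ]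
  ring_nf

lemma iteratedDeriv_eq_s17 (f : ℝ → ℝ) (hf : ∀ x : ℝ, f x = 1 / (1 + x ^ 2)) (n : ℕ) :
    iteratedDeriv n f = fun x : ℝ => (EE n x).re := by
  induction n with
  | zero =>
    funext x
    have h2 : EE 0 (x:ℂ) = Complex.I * ((x:ℂ) + Complex.I)⁻¹ := by
      unfold EE; norm_num [zpow_neg_one]
    rw [iteratedDeriv_zero, hf x, h2]
    simp [Complex.mul_re, Complex.inv_re, Complex.inv_im, Complex.normSq_apply]
    ring_nf
  | succ n ih =>
    funext x
    rw [iteratedDeriv_succ, ih]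
    exact ((EE_hasDerivAt n x).real_of_complex).deriv

lemma norm_sq_aux (x : ℝ) : ‖(x:ℂ) + Complex.I‖ ^ 2 = x^2 + 1 := by
  rw [Complex.sq_norm, Complex.normSq_apply]
  simp
  ring

lemma one_le_norm_aux (x : ℝ) : 1 ≤ ‖(x:ℂ) + Complex.I‖ := by
  nlinarith [norm_sq_aux x, norm_nonneg ((x:ℂ) + Complex.I), sq_nonneg x]

lemma norm_EE_le (n : ℕ) (x : ℝ) :
    ‖EE n x‖ ≤ n.factorial * ‖(x:ℂ) + Complex.I‖⁻¹ := by
  have h1 : (0:ℝ) < ‖(x:ℂ) + Complex.I‖ := lt_of_lt_of_le one_pos (one_le_norm_aux x)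
  have h2 : ‖EE n x‖ = n.factorial * (‖(x:ℂ) + Complex.I‖ ^ (n+1))⁻¹ := by
    unfold EE
    rw [norm_mul, norm_mul, norm_zpow,
      show (-(n+1):ℤ) = -((n+1:ℕ):ℤ) by push_cast; ring, zpow_neg, zpow_natCast]
    simp
  rw [h2]
  gcongr
  · exact le_self_pow₀ (one_le_norm_aux x) (Nat.succ_ne_zero n)

lemma prod_bound_s17 (m n : ℕ) (x : ℝ) :
    |(EE m x).re * (EE n x).re| ≤ (m.factorial * n.factorial : ℝ) * (1 + x^2)⁻¹ := by
  have h1 : (0:ℝ) < ‖(x:ℂ) + Complex.I‖ := lt_of_lt_of_le one_pos (one_le_norm_aux x)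
  have hm := norm_EE_le m x
  have hn := norm_EE_le n x
  have h2 : |(EE m x).re| ≤ ‖EE m x‖ := Complex.abs_re_le_norm _
  have h3 : |(EE n x).re| ≤ ‖EE n x‖ := Complex.abs_re_le_norm _
  have h4 : (‖(x:ℂ) + Complex.I‖⁻¹) * (‖(x:ℂ) + Complex.I‖⁻¹) = (1+x^2)⁻¹ := by
    rw [← mul_inv, ← sq, norm_sq_aux]
    ring_nf
  calc |(EE m x).re * (EE n x).re| = |(EE m x).re| * |(EE n x).re| := abs_mul _ _
    _ ≤ (m.factorial * ‖(x:ℂ) + Complex.I‖⁻¹) * (n.factorial * ‖(x:ℂ) + Complex.I‖⁻¹) := by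
        apply mul_le_mul (h2.trans hm) (h3.trans hn) (abs_nonneg _)
        positivity
    _ = (m.factorial * n.factorial : ℝ) * ((‖(x:ℂ) + Complex.I‖⁻¹) * (‖(x:ℂ) + Complex.I‖⁻¹)) := by
        ring
    _ = _ := by rw [h4]

lemma EE_continuous (n : ℕ) : Continuous (fun x : ℝ => (EE n x).re) := by
  rw [continuous_iff_continuousAt]
  exact fun x => ((EE_hasDerivAt n x).real_of_complex).continuousAt

lemma EE_tendsto (n : ℕ) : Tendsto (fun x : ℝ => (EE n x).re) atTop (nhds 0) := by
  apply squeeze_zero_norm (fun x => (Complex.abs_re_le_norm _).trans (norm_EE_le n x))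
  have h1 : Tendsto (fun x : ℝ => ‖(x:ℂ) + Complex.I‖) atTop atTop := by
    apply tendsto_atTop_mono (fun x => ?_) tendsto_id
    have habs : |x| ≤ ‖(x:ℂ) + Complex.I‖ := by
      nlinarith [norm_sq_aux x, norm_nonneg ((x:ℂ) + Complex.I), abs_nonneg x, _root_.sq_abs x]
    exact le_trans (le_abs_self x) habs
  simpa using (tendsto_inv_atTop_zero.comp h1).const_mul (n.factorial : ℝ)

lemma EE_zero_val (k : ℕ) : (EE (2*k) (0:ℝ)).re = (-1:ℝ)^k * (2*k).factorial := by
  have key : EE (2*k) ((0:ℝ):ℂ) = (((-1:ℝ)^k * (2*k).factorial : ℝ) : ℂ) := by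
    unfold EE
    rw [Complex.ofReal_zero]
    have h1 : ((0:ℂ) + Complex.I)^(-((2*k:ℕ)+1) : ℤ) = (Complex.I ^ (2*k+1))⁻¹ := by
      rw [zero_add, ← zpow_natCast Complex.I (2*k+1), ← zpow_neg]
      norm_num
    have h3 : Complex.I ^ (2*k+1) = (-1:ℂ)^k * Complex.I := by
      rw [pow_succ, pow_mul, Complex.I_sq]
    have h2 : ((-1:ℂ)^k * Complex.I)⁻¹ = (-1:ℂ)^k * (-Complex.I) := by
      rw [mul_inv, Complex.inv_I, ← inv_pow, inv_neg, inv_one]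
    have h4 : ((-1:ℂ))^(2*k) = 1 := by
      rw [pow_mul]; norm_num
    rw [h1, h3, h2, h4]
    push_cast
    linear_combination (-((2*k).factorial : ℂ) * (-1:ℂ)^k) * Complex.I_sq
  rw [key, Complex.ofReal_re]

theorem stmt_17 (f : ℝ → ℝ) (hf : ∀ x : ℝ, f x = 1 / (1 + x ^ 2)) (k : ℕ) :
    ∫ x in Set.Ioi (0 : ℝ), iteratedDeriv (2 * k + 1) f x * iteratedDeriv (2 * k) f x
      = -(1 / 2) * ((2 * k).factorial : ℝ) ^ 2 := by
  rw [iteratedDeriv_eq_s17 f hf (2*k+1), iteratedDeriv_eq_s17 f hf (2*k)]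
  have key : ∫ x in Set.Ioi (0:ℝ), (EE (2*k+1) x).re * (EE (2*k) x).re
      = 0 - ((EE (2*k) (0:ℝ)).re)^2/2 := by
    apply integral_Ioi_of_hasDerivAt_of_tendsto'
      (f := fun x : ℝ => ((EE (2*k) x).re)^2/2)
    · intro x _
      have hd : HasDerivAt (fun x : ℝ => (EE (2*k) x).re) ((EE (2*k+1) x).re) x :=
        (EE_hasDerivAt (2*k) x).real_of_complex
      have := (hd.mul hd).div_const 2
      convert this using 1
      · rfl
      · ext y; simp [sq]
      ring
    · apply Integrable.mono'
        ((integrable_inv_one_add_sq.restrict (s := Set.Ioi (0:ℝ))).const_mul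
          ((2*k+1).factorial * (2*k).factorial : ℝ))
      · exact (((EE_continuous (2*k+1)).mul (EE_continuous (2*k))).aestronglyMeasurable)
      · filter_upwards with x
        exact prod_bound_s17 (2*k+1) (2*k) x
    · have := ((EE_tendsto (2*k)).mul (EE_tendsto (2*k))).div_const 2
      simpa [sq] using this
  rw [key, EE_zero_val k]
  have h : ((-1:ℝ)^k * (2*k).factorial)^2 = ((2*k).factorial : ℝ)^2 := by
    rw [mul_pow, ← pow_mul, mul_comm k 2, pow_mul]
    norm_num
  rw [h]
  ring
end
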